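/- arXiv:2505.00446 — 4 statements merged into one kernel-verified Lean document; each statement's English description precedes it below -/
import Mathlib

section
/- There exists a constant Q > 0 such that the perturbation term g̃(t) = k(t) - t^{-α₀}/Γ(1-α₀) satisfies |g̃(t)| ≤ Q t^{1-α₀}(1 + |ln t|) for all t ∈ (0,T]. -/
open MeasureTheory Set Real

lemma abs_exp_sub_one_le'' (x : ℝ) : |Real.exp x - 1| ≤ |x| * Real.exp |x| := by
  rcases le_or_gt 0 x with h | h
  · rw [abs_of_nonneg h, abs_of_nonneg (by simpa using Real.one_le_exp h : (0:ℝ) ≤ Real.exp x - 1)]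
    have h1 : 1 - x ≤ Real.exp (-x) := by linarith [Real.add_one_le_exp (-x)]
    have h2 : Real.exp (-x) = (Real.exp x)⁻¹ := Real.exp_neg x
    have h3 : (0:ℝ) < Real.exp x := Real.exp_pos x
    rw [h2] at h1
    nlinarith [mul_le_mul_of_nonneg_right h1 h3.le, mul_inv_cancel₀ h3.ne']
  · rw [abs_of_neg h, abs_of_nonpos (by simpa using Real.exp_le_one_iff.mpr h.le : Real.exp x - 1 ≤ 0)]
    have h1 : x + 1 ≤ Real.exp x := Real.add_one_le_exp x
    have h4 : (1:ℝ) ≤ Real.exp (-x) := Real.one_le_exp (by linarith)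
    nlinarith

lemma contDiff_invGamma : ContDiff ℝ 1 (fun a : ℝ => (Real.Gamma (1 - a))⁻¹) := by
  have hC : ContDiff ℂ 1 (fun s : ℂ => (Complex.Gamma s)⁻¹) :=
    ((Complex.analyticOnNhd_univ_iff_differentiable).mpr Complex.differentiable_one_div_Gamma).contDiff
  have h1 : ContDiff ℝ 1 (fun a : ℝ => ((Complex.Gamma (((1 - a : ℝ) : ℂ)))⁻¹).re) :=
    Complex.reCLM.contDiff.comp ((hC.restrict_scalars ℝ).comp
      (Complex.ofRealCLM.contDiff.comp (contDiff_const.sub contDiff_id)))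
  convert h1 using 2 with a
  rw [Complex.Gamma_ofReal, ← Complex.ofReal_inv, Complex.ofReal_re]

/-- Bound `|g̃(t)| ≤ Q t^{1-α₀}(1+|ln t|)` for the perturbation term
`g̃(t) = k(t) - t^{-α₀}/Γ(1-α₀)` with `k(t) = t^{-α(t)}/Γ(1-α(t))`. -/
theorem stmt_2 (T : ℝ) (hT : 0 < T) (α : ℝ → ℝ)
    (hα : ContDiff ℝ 2 α)
    (hbd : ∃ M, ∀ z ∈ Icc (0:ℝ) T, |iteratedDeriv 2 α z| ≤ M)
    (hrange : ∀ z ∈ Icc (0:ℝ) T, α z ∈ Ioo (0:ℝ) 1) :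
    ∃ Q > 0, ∀ t ∈ Ioc (0:ℝ) T,
      |t ^ (-(α t)) / Real.Gamma (1 - α t) - t ^ (-(α 0)) / Real.Gamma (1 - α 0)|
        ≤ Q * t ^ (1 - α 0) * (1 + |Real.log t|) := by
  -- bound on deriv α
  have hder : Continuous (deriv α) := hα.continuous_deriv (by norm_num)
  obtain ⟨L0, hL0⟩ := isCompact_Icc.exists_bound_of_continuousOn
    (s := Icc (0:ℝ) T) hder.continuousOn
  have hL0nn : 0 ≤ L0 := le_trans (norm_nonneg _) (hL0 0 ⟨le_refl _, hT.le⟩)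
  -- Lipschitz bound for α on [0,T]
  have hLip : ∀ t ∈ Icc (0:ℝ) T, |α t - α 0| ≤ L0 * t := by
    intro t ht
    have := Convex.norm_image_sub_le_of_norm_deriv_le
      (f := α) (s := Icc (0:ℝ) T)
      (fun x _ => (hα.differentiable (by norm_num)).differentiableAt)
      hL0 (convex_Icc 0 T) ⟨le_refl _, hT.le⟩ ht
    simpa [Real.norm_eq_abs, abs_of_nonneg ht.1] using this
  -- bound on deriv of G = (Γ(1-·))⁻¹ on [0,1]
  set G : ℝ → ℝ := fun a => (Real.Gamma (1 - a))⁻¹ with hGdef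
  obtain ⟨C0, hC0⟩ := isCompact_Icc.exists_bound_of_continuousOn
    (s := Icc (0:ℝ) 1) (contDiff_invGamma.continuous_deriv le_rfl).continuousOn
  have hC0nn : 0 ≤ C0 := le_trans (norm_nonneg _) (hC0 0 ⟨le_refl _, zero_le_one⟩)
  have hGLip : ∀ a ∈ Icc (0:ℝ) 1, ∀ b ∈ Icc (0:ℝ) 1, |G a - G b| ≤ C0 * |a - b| := by
    intro a ha b hb
    have := Convex.norm_image_sub_le_of_norm_deriv_le
      (f := G) (s := Icc (0:ℝ) 1)
      (fun x _ => (contDiff_invGamma.differentiable one_ne_zero).differentiableAt)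
      hC0 (convex_Icc 0 1) hb ha
    simpa [Real.norm_eq_abs] using this
  set B : ℝ := 1 + T * |Real.log T| with hBdef
  have hB1 : (1:ℝ) ≤ B := by
    have := mul_nonneg hT.le (abs_nonneg (Real.log T)); simp [hBdef]; linarith
  set E : ℝ := Real.exp (L0 * B) with hEdef
  have hEpos : 0 < E := Real.exp_pos _
  refine ⟨L0 * E * (C0 + |G (α 0)|) + 1, by positivity, ?_⟩
  intro t ht
  obtain ⟨ht0, htT⟩ := ht
  have hb0 : α 0 ∈ Ioo (0:ℝ) 1 := hrange 0 ⟨le_refl _, hT.le⟩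
  have ha0 : α t ∈ Ioo (0:ℝ) 1 := hrange t ⟨ht0.le, htT⟩
  set l := Real.log t with hldef
  -- t * |log t| ≤ B
  have htb : t * |l| ≤ B := by
    rcases le_or_gt t 1 with h | h
    · rw [abs_of_nonpos (Real.log_nonpos ht0.le h)]
      have h5 : Real.log t⁻¹ ≤ t⁻¹ - 1 := Real.log_le_sub_one_of_pos (inv_pos.mpr ht0)
      rw [Real.log_inv] at h5
      have h6 := mul_le_mul_of_nonneg_left h5 ht0.le
      have h7 := mul_inv_cancel₀ ht0.ne'
      have := mul_nonneg hT.le (abs_nonneg (Real.log T))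
      simp only [hBdef]; nlinarith
    · rw [abs_of_nonneg (Real.log_nonneg h.le)]
      have h5 : Real.log t ≤ Real.log T := Real.log_le_log ht0 htT
      have h6 : Real.log T ≤ |Real.log T| := le_abs_self _
      have h7 : 0 ≤ Real.log t := Real.log_nonneg h.le
      have h8 : t * l ≤ T * |Real.log T| :=
        mul_le_mul htT (le_trans h5 h6) h7 hT.le
      simp only [hBdef]; linarith
  have hab : |α t - α 0| ≤ L0 * t := hLip t ⟨ht0.le, htT⟩
  have habl : |l * (α 0 - α t)| ≤ L0 * B := by
    rw [abs_mul, abs_sub_comm]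
    calc |l| * |α t - α 0| ≤ |l| * (L0 * t) :=
          mul_le_mul_of_nonneg_left hab (abs_nonneg _)
      _ = L0 * (t * |l|) := by ring
      _ ≤ L0 * B := mul_le_mul_of_nonneg_left htb hL0nn
  set P := Real.exp (l * -(α t)) with hPdef
  set Pb := Real.exp (l * -(α 0)) with hPbdef
  set X := Real.exp (l * (1 - α 0)) with hXdef
  set F := Real.exp (l * (α 0 - α t)) with hFdef
  have hP : 0 < P := Real.exp_pos _
  have hPb : 0 < Pb := Real.exp_pos _
  have hX : 0 < X := Real.exp_pos _
  have hexpt : t = Real.exp l := (Real.exp_log ht0).symm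
  have f1 : P * t = X * F := by
    rw [hexpt, hPdef, hXdef, hFdef, ← Real.exp_add, ← Real.exp_add]; ring_nf
  have f2 : Pb * t = X := by
    rw [hexpt, hPbdef, hXdef, ← Real.exp_add]; ring_nf
  have f5 : F ≤ E := by
    calc F ≤ Real.exp |l * (α 0 - α t)| := Real.exp_le_exp.mpr (le_abs_self _)
      _ ≤ E := Real.exp_le_exp.mpr habl
  have f3 : |G (α t) - G (α 0)| ≤ C0 * (L0 * t) := by
    calc |G (α t) - G (α 0)| ≤ C0 * |α t - α 0| :=
          hGLip (α t) ⟨ha0.1.le, ha0.2.le⟩ (α 0) ⟨hb0.1.le, hb0.2.le⟩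
      _ ≤ C0 * (L0 * t) := mul_le_mul_of_nonneg_left hab hC0nn
  have f4 : |F - 1| ≤ (|l| * (L0 * t)) * E := by
    calc |F - 1| ≤ |l * (α 0 - α t)| * Real.exp |l * (α 0 - α t)| :=
          abs_exp_sub_one_le'' _
      _ ≤ (|l| * (L0 * t)) * E := by
          apply mul_le_mul _ (Real.exp_le_exp.mpr habl) (Real.exp_pos _).le
            (by positivity)
          rw [abs_mul, abs_sub_comm]
          exact mul_le_mul_of_nonneg_left hab (abs_nonneg _)
  -- rewrite goal
  rw [Real.rpow_def_of_pos ht0, Real.rpow_def_of_pos ht0, Real.rpow_def_of_pos ht0,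
    div_eq_mul_inv, div_eq_mul_inv, ← hldef, ← hPdef, ← hPbdef, ← hXdef]
  show |P * G (α t) - Pb * G (α 0)| ≤ (L0 * E * (C0 + |G (α 0)|) + 1) * X * (1 + |l|)
  have hPP : P - Pb = Pb * (F - 1) := by
    rw [hPdef, hPbdef, hFdef, mul_sub, mul_one, ← Real.exp_add]
    ring_nf
  have split : |P * G (α t) - Pb * G (α 0)| ≤
      P * |G (α t) - G (α 0)| + (Pb * |F - 1|) * |G (α 0)| := by
    have key : P * G (α t) - Pb * G (α 0)
        = P * (G (α t) - G (α 0)) + (Pb * (F - 1)) * G (α 0) := by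
      linear_combination G (α 0) * hPP
    calc |P * G (α t) - Pb * G (α 0)|
        = |P * (G (α t) - G (α 0)) + (Pb * (F - 1)) * G (α 0)| := by rw [key]
      _ ≤ |P * (G (α t) - G (α 0))| + |(Pb * (F - 1)) * G (α 0)| := abs_add_le _ _
      _ = P * |G (α t) - G (α 0)| + (Pb * |F - 1|) * |G (α 0)| := by
          rw [abs_mul, abs_mul, abs_mul, abs_of_pos hP, abs_of_pos hPb]
  have step1 : P * |G (α t) - G (α 0)| ≤ C0 * L0 * E * X := by
    calc P * |G (α t) - G (α 0)| ≤ P * (C0 * (L0 * t)) :=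
          mul_le_mul_of_nonneg_left f3 hP.le
      _ = C0 * L0 * (P * t) := by ring
      _ = C0 * L0 * (X * F) := by rw [f1]
      _ ≤ C0 * L0 * (X * E) := by
          exact mul_le_mul_of_nonneg_left (mul_le_mul_of_nonneg_left f5 hX.le)
            (by positivity)
      _ = C0 * L0 * E * X := by ring
  have step2 : (Pb * |F - 1|) * |G (α 0)| ≤ L0 * E * |G (α 0)| * (X * |l|) := by
    have u1 : Pb * |F - 1| ≤ L0 * E * (X * |l|) := by
      calc Pb * |F - 1| ≤ Pb * ((|l| * (L0 * t)) * E) :=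
            mul_le_mul_of_nonneg_left f4 hPb.le
        _ = L0 * E * ((Pb * t) * |l|) := by ring
        _ = L0 * E * (X * |l|) := by rw [f2]
    calc (Pb * |F - 1|) * |G (α 0)| ≤ (L0 * E * (X * |l|)) * |G (α 0)| :=
          mul_le_mul_of_nonneg_right u1 (abs_nonneg _)
      _ = L0 * E * |G (α 0)| * (X * |l|) := by ring
  have final : C0 * L0 * E * X + L0 * E * |G (α 0)| * (X * |l|)
      ≤ (L0 * E * (C0 + |G (α 0)|) + 1) * X * (1 + |l|) := by
    have q1 : 0 ≤ L0 * E * C0 * (X * |l|) := by positivity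
    have q2 : 0 ≤ L0 * E * |G (α 0)| * X := by positivity
    have q3 : 0 ≤ X * |l| := by positivity
    nlinarith [hX.le, abs_nonneg (G (α 0)), abs_nonneg l]
  linarith [split, step1, step2, final]
end

section
/- There exists a constant Q > 0 such that the derivative of the perturbation term g̃(t) = k(t) - t^{-α₀}/Γ(1-α₀) satisfies |g̃'(t)| ≤ Q t^{-α₀}(1 + |ln t|) for all t ∈ (0,T]. -/
open MeasureTheory Set Real

lemma gamma_ne_neg_nat {x : ℝ} (hx : 0 < x) : ∀ n : ℕ, x ≠ -n := by
  intro n hEq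
  have h0 : (0:ℝ) ≤ (n:ℝ) := Nat.cast_nonneg n
  linarith

lemma aux_gamma_deriv_bound (l u : ℝ) (hl : 0 < l) :
    ∃ Cg ≥ 0, ∀ x ∈ Icc l u, |deriv Real.Gamma x| ≤ Cg := by
  have hne : ∀ z : ℂ, 0 < z.re → ∀ m : ℕ, z ≠ -m := by
    intro z hz m hzm
    rw [hzm] at hz
    simp only [Complex.neg_re, Complex.natCast_re] at hz
    have := Nat.cast_nonneg (α := ℝ) m
    linarith
  have hUo : IsOpen {z : ℂ | 0 < z.re} := isOpen_lt continuous_const Complex.continuous_re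
  have hdo : DifferentiableOn ℂ Complex.Gamma {z : ℂ | 0 < z.re} := fun z hz =>
    (Complex.differentiableAt_Gamma z (hne z hz)).differentiableWithinAt
  have hc : ContinuousOn (deriv Complex.Gamma) {z : ℂ | 0 < z.re} :=
    ((hdo.analyticOnNhd hUo).deriv).continuousOn
  have hK : IsCompact ((fun x : ℝ => (x : ℂ)) '' Icc l u) :=
    isCompact_Icc.image Complex.continuous_ofReal
  have hsub : ((fun x : ℝ => (x : ℂ)) '' Icc l u) ⊆ {z : ℂ | 0 < z.re} := by
    rintro _ ⟨x, hx, rfl⟩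
    simp only [mem_setOf_eq, Complex.ofReal_re]
    linarith [hx.1]
  obtain ⟨C, hC⟩ := hK.exists_bound_of_continuousOn (hc.mono hsub)
  refine ⟨max C 0, le_max_right _ _, fun x hx => ?_⟩
  have hxpos : (0:ℝ) < x := lt_of_lt_of_le hl hx.1
  have hdc : HasDerivAt Complex.Gamma (deriv Complex.Gamma ↑x) ↑x :=
    (Complex.differentiableAt_Gamma _ (hne _ (by simpa using hxpos))).hasDerivAt
  have hdr := hdc.real_of_complex
  have heq : (fun y : ℝ => (Complex.Gamma ↑y).re) = Real.Gamma := by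
    funext y
    rw [Complex.Gamma_ofReal, Complex.ofReal_re]
  rw [heq] at hdr
  rw [hdr.deriv]
  calc |(deriv Complex.Gamma ↑x).re| ≤ ‖deriv Complex.Gamma ↑x‖ := Complex.abs_re_le_norm _
    _ ≤ C := hC _ ⟨x, hx, rfl⟩
    _ ≤ max C 0 := le_max_left _ _

noncomputable def psiAux (t a : ℝ) : ℝ := a * t ^ (-a) / Real.Gamma (1 - a)

noncomputable def psidAux (t a : ℝ) : ℝ :=
  ((t ^ (-a) + a * (-(t ^ (-a) * Real.log t))) * Real.Gamma (1 - a)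
    - a * t ^ (-a) * (deriv Real.Gamma (1 - a) * (-1))) / Real.Gamma (1 - a) ^ 2

lemma hasDerivAt_gamma_one_sub (a : ℝ) (ha : a < 1) :
    HasDerivAt (fun x : ℝ => Real.Gamma (1 - x)) (deriv Real.Gamma (1 - a) * (-1)) a := by
  have hΓd : HasDerivAt Real.Gamma (deriv Real.Gamma (1 - a)) (1 - a) :=
    (Real.differentiableAt_Gamma (gamma_ne_neg_nat (by linarith))).hasDerivAt
  have hinner : HasDerivAt (fun x : ℝ => 1 - x) (-1) a := by
    simpa using (hasDerivAt_id a).const_sub 1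
  simpa [Function.comp_def] using hΓd.comp a hinner

lemma psiAux_hasDerivAt {t : ℝ} (ht : 0 < t) {a : ℝ} (ha1 : a < 1) :
    HasDerivAt (psiAux t) (psidAux t a) a := by
  have hΓpos : 0 < Real.Gamma (1 - a) := Real.Gamma_pos_of_pos (by linarith)
  have hpow : HasDerivAt (fun a : ℝ => t ^ (-a)) (-(t ^ (-a) * Real.log t)) a := by
    have h := (hasDerivAt_const a t).rpow (hasDerivAt_id a).neg ht
    convert h using 1
    all_goals simp
  have hu : HasDerivAt (fun a : ℝ => a * t ^ (-a))
      (t ^ (-a) + a * (-(t ^ (-a) * Real.log t))) a := by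
    have h := (hasDerivAt_id a).mul hpow
    convert h using 1
    · rfl
    · rfl
    · funext y; simp
    · simp
  exact hu.div (hasDerivAt_gamma_one_sub a ha1) hΓpos.ne'

lemma psidAux_eq {t a : ℝ} (hΓ : Real.Gamma (1 - a) ≠ 0) :
    psidAux t a = t ^ (-a) *
      ((1 - a * Real.log t) / Real.Gamma (1 - a)
        + a * deriv Real.Gamma (1 - a) / Real.Gamma (1 - a) ^ 2) := by
  unfold psidAux
  field_simp
  ring

lemma aux_hasDerivAt_k (α : ℝ → ℝ) (hα : Differentiable ℝ α) {t : ℝ} (ht : 0 < t)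
    (h1 : α t < 1) :
    HasDerivAt (fun s => s ^ (-(α s)) / Real.Gamma (1 - α s))
      ((((-(α t)) * t ^ (-(α t) - 1) + (-(deriv α t)) * t ^ (-(α t)) * Real.log t)
          * Real.Gamma (1 - α t)
        - t ^ (-(α t)) * (deriv Real.Gamma (1 - α t) * (-(deriv α t))))
        / Real.Gamma (1 - α t) ^ 2) t := by
  have hαd : HasDerivAt α (deriv α t) t := (hα t).hasDerivAt
  have hnum : HasDerivAt (fun s : ℝ => s ^ (-(α s)))
      ((-(α t)) * t ^ (-(α t) - 1) + (-(deriv α t)) * t ^ (-(α t)) * Real.log t) t := by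
    have h := (hasDerivAt_id t).rpow hαd.neg (by simpa using ht)
    convert h using 1
    all_goals simp [id]
  have hΓpos : 0 < Real.Gamma (1 - α t) := Real.Gamma_pos_of_pos (by linarith)
  have hΓd : HasDerivAt Real.Gamma (deriv Real.Gamma (1 - α t)) (1 - α t) :=
    (Real.differentiableAt_Gamma (gamma_ne_neg_nat (by linarith))).hasDerivAt
  have hinner : HasDerivAt (fun s => 1 - α s) (-(deriv α t)) t := hαd.const_sub 1
  have hden : HasDerivAt (fun s => Real.Gamma (1 - α s))
      (deriv Real.Gamma (1 - α t) * (-(deriv α t))) t := by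
    simpa [Function.comp_def] using hΓd.comp t hinner
  exact hnum.div hden hΓpos.ne'

lemma aux_tlog (T : ℝ) : ∀ t ∈ Ioc (0:ℝ) T, t * |Real.log t| ≤ 1 + T * T := by
  intro t ht
  by_cases h1 : t ≤ 1
  · have h := Real.abs_log_mul_self_lt t ht.1 h1
    rw [abs_mul, abs_of_pos ht.1] at h
    nlinarith [mul_self_nonneg T]
  · push_neg at h1
    have hlogpos : 0 ≤ Real.log t := Real.log_nonneg h1.le
    rw [abs_of_nonneg hlogpos]
    have hlt : Real.log t ≤ t := (Real.log_le_sub_one_of_pos ht.1).trans (by linarith)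
    calc t * Real.log t ≤ t * t := mul_le_mul_of_nonneg_left hlt ht.1.le
      _ ≤ T * T := mul_self_le_mul_self ht.1.le ht.2
      _ ≤ 1 + T * T := by linarith

set_option maxHeartbeats 2000000 in
/-- Bound `|g̃'(t)| ≤ Q t^{-α₀}(1+|ln t|)` for the derivative of the
perturbation term `g̃(t) = k(t) - t^{-α₀}/Γ(1-α₀)`. -/
theorem stmt_3 (T : ℝ) (hT : 0 < T) (α : ℝ → ℝ)
    (hα : ContDiff ℝ 2 α)
    (hbd : ∃ M, ∀ z ∈ Icc (0:ℝ) T, |iteratedDeriv 2 α z| ≤ M)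
    (hrange : ∀ z ∈ Icc (0:ℝ) T, α z ∈ Ioo (0:ℝ) 1) :
    ∃ Q > 0, ∀ t ∈ Ioc (0:ℝ) T,
      |deriv (fun s => s ^ (-(α s)) / Real.Gamma (1 - α s)
          - s ^ (-(α 0)) / Real.Gamma (1 - α 0)) t|
        ≤ Q * t ^ (-(α 0)) * (1 + |Real.log t|) := by
  clear hbd
  have h0T : (0:ℝ) ∈ Icc (0:ℝ) T := left_mem_Icc.mpr hT.le
  have hne : (Icc (0:ℝ) T).Nonempty := ⟨0, h0T⟩
  -- min and max of α on [0,T]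
  obtain ⟨zm, hzmT, hzmin⟩ := isCompact_Icc.exists_isMinOn hne hα.continuous.continuousOn
  obtain ⟨zM, hzMT, hzmax⟩ := isCompact_Icc.exists_isMaxOn hne hα.continuous.continuousOn
  have hm0 : 0 < α zm := (hrange zm hzmT).1
  have hM1 : α zM < 1 := (hrange zM hzMT).2
  have hmem : ∀ z ∈ Icc (0:ℝ) T, α z ∈ Icc (α zm) (α zM) := fun z hz => ⟨hzmin hz, hzmax hz⟩
  -- Gamma lower bound γ₁ on Icc (1 - α zM) (1 - α zm)
  have hIpos : ∀ x ∈ Icc (1 - α zM) (1 - α zm), 0 < x := fun x hx =>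
    lt_of_lt_of_le (by linarith) hx.1
  have hΓcont : ContinuousOn Real.Gamma (Icc (1 - α zM) (1 - α zm)) := fun x hx =>
    (Real.differentiableAt_Gamma
      (gamma_ne_neg_nat (hIpos x hx))).continuousAt.continuousWithinAt
  have hmM : α zm ≤ α zM := hzmin hzMT
  have hImem : (1 - α zM) ∈ Icc (1 - α zM) (1 - α zm) := ⟨le_refl _, by linarith⟩
  obtain ⟨xg, hxgI, hgmin⟩ := isCompact_Icc.exists_isMinOn ⟨1 - α zM, hImem⟩ hΓcont
  have hγpos : 0 < Real.Gamma xg := Real.Gamma_pos_of_pos (hIpos xg hxgI)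
  have hγlb : ∀ x ∈ Icc (1 - α zM) (1 - α zm), Real.Gamma xg ≤ Real.Gamma x :=
    fun x hx => hgmin hx
  -- bound on deriv Gamma
  obtain ⟨Cg, hCg0, hCg⟩ := aux_gamma_deriv_bound (1 - α zM) (1 - α zm) (by linarith)
  -- bound on deriv α
  obtain ⟨L0, hL0⟩ := isCompact_Icc.exists_bound_of_continuousOn
    ((hα.continuous_deriv one_le_two).continuousOn : ContinuousOn (deriv α) (Icc (0:ℝ) T))
  have hL0' : (0:ℝ) ≤ max L0 0 := le_max_right _ _
  have hLb : ∀ z ∈ Icc (0:ℝ) T, |deriv α z| ≤ max L0 0 := fun z hz =>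
    le_trans (by rw [← Real.norm_eq_abs]; exact hL0 z hz) (le_max_left _ _)
  have hdiff : Differentiable ℝ α := hα.differentiable (by norm_num)
  have hLip : ∀ z ∈ Icc (0:ℝ) T, |α z - α 0| ≤ max L0 0 * z := by
    intro z hz
    have h := Convex.norm_image_sub_le_of_norm_hasDerivWithin_le
      (f := α) (f' := deriv α) (s := Icc (0:ℝ) T)
      (fun x _ => (hdiff x).hasDerivAt.hasDerivWithinAt)
      (fun x hx => by rw [Real.norm_eq_abs]; exact hLb x hx)
      (convex_Icc _ _) h0T hz
    simpa [Real.norm_eq_abs, abs_of_nonneg hz.1] using h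
  -- exponent comparison
  have hexp : ∀ t ∈ Ioc (0:ℝ) T, ∀ x : ℝ, |x - α 0| ≤ max L0 0 * t →
      t ^ (-x) ≤ Real.exp (max L0 0 * (1 + T * T)) * t ^ (-(α 0)) := by
    intro t ht x hx
    have key : Real.log t * (α 0 - x) ≤ max L0 0 * (1 + T * T) := by
      calc Real.log t * (α 0 - x) ≤ |Real.log t * (α 0 - x)| := le_abs_self _
        _ = |Real.log t| * |α 0 - x| := abs_mul _ _
        _ ≤ |Real.log t| * (max L0 0 * t) := by
            apply mul_le_mul_of_nonneg_left _ (abs_nonneg _)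
            rwa [abs_sub_comm]
        _ = max L0 0 * (t * |Real.log t|) := by ring
        _ ≤ max L0 0 * (1 + T * T) := mul_le_mul_of_nonneg_left (aux_tlog T t ht) hL0'
    rw [Real.rpow_def_of_pos ht.1, Real.rpow_def_of_pos ht.1, ← Real.exp_add]
    apply Real.exp_le_exp.mpr
    nlinarith [key]
  set L := max L0 0 with hLdef
  set C₁ := Real.exp (L * (1 + T * T)) with hC₁def
  have hC₁pos : 0 < C₁ := Real.exp_pos _
  set γ₁ := Real.Gamma xg with hγdef
  set Cψ := C₁ * (1 / γ₁ + Cg / γ₁ ^ 2) with hCψdef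
  have hCψpos : 0 < Cψ := by
    rw [hCψdef]
    have : 0 < 1 / γ₁ := by positivity
    have h2 : 0 ≤ Cg / γ₁ ^ 2 := by positivity
    nlinarith
  refine ⟨2 * (L * Cψ) + 1, by positivity, ?_⟩
  intro t ht
  obtain ⟨ht0, htT⟩ := ht
  have htmem : t ∈ Icc (0:ℝ) T := ⟨ht0.le, htT⟩
  have hαtmem := hmem t htmem
  have hαt1 : α t < 1 := lt_of_le_of_lt hαtmem.2 hM1
  have hα01 : α 0 < 1 := lt_of_le_of_lt (hmem 0 h0T).2 hM1
  have hΓt : 0 < Real.Gamma (1 - α t) := Real.Gamma_pos_of_pos (by linarith)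
  have hΓ0 : 0 < Real.Gamma (1 - α 0) := Real.Gamma_pos_of_pos (by linarith)
  have hpa0 : (0:ℝ) < t ^ (-(α 0)) := Real.rpow_pos_of_pos ht0 _
  have hlog0 : (0:ℝ) ≤ |Real.log t| := abs_nonneg _
  have hk := aux_hasDerivAt_k α hdiff ht0 hαt1
  have hc : HasDerivAt (fun s : ℝ => s ^ (-(α 0)) / Real.Gamma (1 - α 0))
      ((-(α 0)) * t ^ (-(α 0) - 1) / Real.Gamma (1 - α 0)) t :=
    (Real.hasDerivAt_rpow_const (Or.inl ht0.ne')).div_const _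
  have hder := (hk.sub hc).deriv
  have hrw1 : t ^ (-(α t) - 1) = t ^ (-(α t)) * t⁻¹ := by
    rw [Real.rpow_sub ht0, Real.rpow_one, div_eq_mul_inv]
  have hrw2 : t ^ (-(α 0) - 1) = t ^ (-(α 0)) * t⁻¹ := by
    rw [Real.rpow_sub ht0, Real.rpow_one, div_eq_mul_inv]
  have hABeq : deriv (fun s => s ^ (-(α s)) / Real.Gamma (1 - α s)
      - s ^ (-(α 0)) / Real.Gamma (1 - α 0)) t
      = deriv α t * (t ^ (-(α t)) * (-(Real.log t) / Real.Gamma (1 - α t)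
          + deriv Real.Gamma (1 - α t) / Real.Gamma (1 - α t) ^ 2))
        + (-(t⁻¹ * (psiAux t (α t) - psiAux t (α 0)))) := by
    rw [show (fun s => s ^ (-(α s)) / Real.Gamma (1 - α s) - s ^ (-(α 0)) / Real.Gamma (1 - α 0)) = (fun s => s ^ (-(α s)) / Real.Gamma (1 - α s)) - (fun s => s ^ (-(α 0)) / Real.Gamma (1 - α 0)) from rfl, hder, hrw1, hrw2]
    unfold psiAux
    field_simp
    ring
  -- bound for psidAux on the unordered interval
  have hψdbd : ∀ x ∈ uIcc (α 0) (α t),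
      |psidAux t x| ≤ Cψ * t ^ (-(α 0)) * (1 + |Real.log t|) := by
    intro x hx
    have hxmm : x ∈ Icc (α zm) (α zM) := uIcc_subset_Icc (hmem 0 h0T) hαtmem hx
    have hx1 : x < 1 := lt_of_le_of_lt hxmm.2 hM1
    have hxd : |x - α 0| ≤ L * t := (abs_sub_left_of_mem_uIcc hx).trans (hLip t htmem)
    have hpx : t ^ (-x) ≤ C₁ * t ^ (-(α 0)) := hexp t ⟨ht0, htT⟩ x hxd
    have hpxpos : (0:ℝ) < t ^ (-x) := Real.rpow_pos_of_pos ht0 _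
    have hΓxI : (1 - x) ∈ Icc (1 - α zM) (1 - α zm) :=
      ⟨by linarith [hxmm.2], by linarith [hxmm.1]⟩
    have hΓx : γ₁ ≤ Real.Gamma (1 - x) := hγlb _ hΓxI
    have hΓxpos : 0 < Real.Gamma (1 - x) := lt_of_lt_of_le hγpos hΓx
    have hdΓx : |deriv Real.Gamma (1 - x)| ≤ Cg := hCg _ hΓxI
    have hxabs : |x| ≤ 1 := abs_le.mpr ⟨by linarith [hxmm.1], hx1.le⟩
    rw [psidAux_eq hΓxpos.ne', abs_mul, abs_of_pos hpxpos]
    have h1b : |(1 - x * Real.log t) / Real.Gamma (1 - x)| ≤ (1 + |Real.log t|) / γ₁ := by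
      rw [abs_div, abs_of_pos hΓxpos]
      apply div_le_div₀ (by positivity) ?_ hγpos hΓx
      calc |1 - x * Real.log t| ≤ |(1:ℝ)| + |x * Real.log t| := abs_sub _ _
        _ ≤ 1 + |Real.log t| := by
            rw [abs_one, abs_mul]
            nlinarith [abs_nonneg x]
    have h2b : |x * deriv Real.Gamma (1 - x) / Real.Gamma (1 - x) ^ 2| ≤ Cg / γ₁ ^ 2 := by
      rw [abs_div, abs_mul, abs_of_pos (pow_pos hΓxpos 2)]
      apply div_le_div₀ hCg0 ?_ (pow_pos hγpos 2) (pow_le_pow_left₀ hγpos.le hΓx 2)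
      calc |x| * |deriv Real.Gamma (1 - x)| ≤ 1 * Cg :=
            mul_le_mul hxabs hdΓx (abs_nonneg _) zero_le_one
        _ = Cg := one_mul _
    have habs : |(1 - x * Real.log t) / Real.Gamma (1 - x)
        + x * deriv Real.Gamma (1 - x) / Real.Gamma (1 - x) ^ 2|
        ≤ (1 + |Real.log t|) / γ₁ + Cg / γ₁ ^ 2 :=
      (abs_add_le _ _).trans (add_le_add h1b h2b)
    have hfac : (1 + |Real.log t|) / γ₁ + Cg / γ₁ ^ 2
        ≤ (1 / γ₁ + Cg / γ₁ ^ 2) * (1 + |Real.log t|) := by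
      have h := mul_nonneg (div_nonneg hCg0 (pow_pos hγpos 2).le) hlog0
      have hexpand : (1 / γ₁ + Cg / γ₁ ^ 2) * (1 + |Real.log t|)
          = (1 + |Real.log t|) / γ₁ + Cg / γ₁ ^ 2 + Cg / γ₁ ^ 2 * |Real.log t| := by ring
      linarith
    calc t ^ (-x) * |(1 - x * Real.log t) / Real.Gamma (1 - x)
          + x * deriv Real.Gamma (1 - x) / Real.Gamma (1 - x) ^ 2|
        ≤ (C₁ * t ^ (-(α 0))) * ((1 + |Real.log t|) / γ₁ + Cg / γ₁ ^ 2) :=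
          mul_le_mul hpx habs (abs_nonneg _) (by positivity)
      _ ≤ (C₁ * t ^ (-(α 0))) * ((1 / γ₁ + Cg / γ₁ ^ 2) * (1 + |Real.log t|)) :=
          mul_le_mul_of_nonneg_left hfac (by positivity)
      _ = Cψ * t ^ (-(α 0)) * (1 + |Real.log t|) := by rw [hCψdef]; ring
  -- mean value theorem for psiAux
  have hMVT : |psiAux t (α t) - psiAux t (α 0)|
      ≤ (Cψ * t ^ (-(α 0)) * (1 + |Real.log t|)) * |α t - α 0| := by
    have h := Convex.norm_image_sub_le_of_norm_hasDerivWithin_le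
      (f := psiAux t) (f' := psidAux t) (s := uIcc (α 0) (α t))
      (fun x hx => (psiAux_hasDerivAt ht0
        (lt_of_le_of_lt (uIcc_subset_Icc (hmem 0 h0T) hαtmem hx).2 hM1)).hasDerivWithinAt)
      (fun x hx => by rw [Real.norm_eq_abs]; exact hψdbd x hx)
      (convex_uIcc _ _) left_mem_uIcc right_mem_uIcc
    simpa [Real.norm_eq_abs] using h
  have hBbd : |-(t⁻¹ * (psiAux t (α t) - psiAux t (α 0)))|
      ≤ L * (Cψ * t ^ (-(α 0)) * (1 + |Real.log t|)) := by
    rw [abs_neg, abs_mul, abs_of_pos (inv_pos.mpr ht0)]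
    have hstep : |psiAux t (α t) - psiAux t (α 0)|
        ≤ (Cψ * t ^ (-(α 0)) * (1 + |Real.log t|)) * (L * t) :=
      hMVT.trans (mul_le_mul_of_nonneg_left (hLip t htmem) (by positivity))
    calc t⁻¹ * |psiAux t (α t) - psiAux t (α 0)|
        ≤ t⁻¹ * ((Cψ * t ^ (-(α 0)) * (1 + |Real.log t|)) * (L * t)) :=
          mul_le_mul_of_nonneg_left hstep (inv_pos.mpr ht0).le
      _ = L * (Cψ * t ^ (-(α 0)) * (1 + |Real.log t|)) := by
          field_simp
  have hw : |-(Real.log t) / Real.Gamma (1 - α t)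
      + deriv Real.Gamma (1 - α t) / Real.Gamma (1 - α t) ^ 2|
      ≤ |Real.log t| / γ₁ + Cg / γ₁ ^ 2 := by
    have hΓtI : (1 - α t) ∈ Icc (1 - α zM) (1 - α zm) :=
      ⟨by linarith [hαtmem.2], by linarith [hαtmem.1]⟩
    have hΓtlb : γ₁ ≤ Real.Gamma (1 - α t) := hγlb _ hΓtI
    have hdΓt : |deriv Real.Gamma (1 - α t)| ≤ Cg := hCg _ hΓtI
    refine (abs_add_le _ _).trans (add_le_add ?_ ?_)
    · rw [abs_div, abs_neg, abs_of_pos hΓt]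
      exact div_le_div₀ hlog0 le_rfl hγpos hΓtlb
    · rw [abs_div, abs_of_pos (pow_pos hΓt 2)]
      exact div_le_div₀ hCg0 hdΓt (pow_pos hγpos 2) (pow_le_pow_left₀ hγpos.le hΓtlb 2)
  have hpt : t ^ (-(α t)) ≤ C₁ * t ^ (-(α 0)) := hexp t ⟨ht0, htT⟩ (α t) (hLip t htmem)
  have hptpos : (0:ℝ) < t ^ (-(α t)) := Real.rpow_pos_of_pos ht0 _
  have hAbd : |deriv α t * (t ^ (-(α t)) * (-(Real.log t) / Real.Gamma (1 - α t)
      + deriv Real.Gamma (1 - α t) / Real.Gamma (1 - α t) ^ 2))|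
      ≤ L * (Cψ * t ^ (-(α 0)) * (1 + |Real.log t|)) := by
    rw [abs_mul, abs_mul, abs_of_pos hptpos]
    have hfac2 : C₁ * t ^ (-(α 0)) * (|Real.log t| / γ₁ + Cg / γ₁ ^ 2)
        ≤ Cψ * t ^ (-(α 0)) * (1 + |Real.log t|) := by
      have hstep : |Real.log t| / γ₁ + Cg / γ₁ ^ 2
          ≤ (1 / γ₁ + Cg / γ₁ ^ 2) * (1 + |Real.log t|) := by
        have h := mul_nonneg (div_nonneg hCg0 (pow_pos hγpos 2).le) hlog0
        have h2 : 0 < 1 / γ₁ := by positivity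
        have hexpand : (1 / γ₁ + Cg / γ₁ ^ 2) * (1 + |Real.log t|)
            = |Real.log t| / γ₁ + Cg / γ₁ ^ 2 + 1 / γ₁ + Cg / γ₁ ^ 2 * |Real.log t| := by ring
        linarith
      calc C₁ * t ^ (-(α 0)) * (|Real.log t| / γ₁ + Cg / γ₁ ^ 2)
          ≤ C₁ * t ^ (-(α 0)) * ((1 / γ₁ + Cg / γ₁ ^ 2) * (1 + |Real.log t|)) :=
            mul_le_mul_of_nonneg_left hstep (by positivity)
        _ = Cψ * t ^ (-(α 0)) * (1 + |Real.log t|) := by rw [hCψdef]; ring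
    calc |deriv α t| * (t ^ (-(α t)) * |-(Real.log t) / Real.Gamma (1 - α t)
          + deriv Real.Gamma (1 - α t) / Real.Gamma (1 - α t) ^ 2|)
        ≤ L * ((C₁ * t ^ (-(α 0))) * (|Real.log t| / γ₁ + Cg / γ₁ ^ 2)) := by
          apply mul_le_mul (hLb t htmem) ?_ (by positivity) hL0'
          exact mul_le_mul hpt hw (abs_nonneg _) (by positivity)
      _ ≤ L * (Cψ * t ^ (-(α 0)) * (1 + |Real.log t|)) := by
          exact mul_le_mul_of_nonneg_left hfac2 hL0'
  rw [hABeq]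
  calc |deriv α t * (t ^ (-(α t)) * (-(Real.log t) / Real.Gamma (1 - α t)
        + deriv Real.Gamma (1 - α t) / Real.Gamma (1 - α t) ^ 2))
      + -(t⁻¹ * (psiAux t (α t) - psiAux t (α 0)))|
      ≤ L * (Cψ * t ^ (-(α 0)) * (1 + |Real.log t|))
        + L * (Cψ * t ^ (-(α 0)) * (1 + |Real.log t|)) :=
        (abs_add_le _ _).trans (add_le_add hAbd hBbd)
    _ ≤ (2 * (L * Cψ) + 1) * t ^ (-(α 0)) * (1 + |Real.log t|) := by
        nlinarith [mul_nonneg hpa0.le (by linarith : (0:ℝ) ≤ 1 + |Real.log t|)]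
end

section
/- The function g̃(t) = k(t) - t^{-α₀}/Γ(1-α₀) extends continuously to t = 0 with g̃(0) = 0, and g̃ ∈ L¹(0,T) with g̃' ∈ L¹(0,T). -/
open MeasureTheory Set Real Filter

lemma aux_exp_sub_one {U x : ℝ} (hx : |x| ≤ U) : |Real.exp x - 1| ≤ Real.exp U * |x| := by
  have h0 : (0:ℝ) ∈ Icc (-U) U := by
    constructor <;> [linarith [abs_nonneg x, neg_abs_le x]; linarith [abs_nonneg x]]
  have hxm : x ∈ Icc (-U) U := by
    constructor <;> [linarith [neg_abs_le x]; linarith [le_abs_self x]]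
  have key := Convex.norm_image_sub_le_of_norm_hasDerivWithin_le
    (f := Real.exp) (f' := Real.exp) (s := Icc (-U) U) (C := Real.exp U)
    (fun y _ => (Real.hasDerivAt_exp y).hasDerivWithinAt)
    (fun y hy => by rw [Real.norm_eq_abs, abs_of_pos (Real.exp_pos y)]; exact Real.exp_le_exp.2 hy.2)
    (convex_Icc _ _) h0 hxm
  simpa [Real.norm_eq_abs] using key

lemma aux_abs_log {t ε : ℝ} (ht : 0 < t) (ht1 : t ≤ 1) (hε : 0 < ε) :
    |Real.log t| ≤ t ^ (-ε) / ε := by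
  rw [abs_of_nonpos (Real.log_nonpos ht.le ht1)]
  have h := Real.log_le_rpow_div (x := t⁻¹) (by positivity) hε
  rw [Real.log_inv, Real.inv_rpow ht.le, ← Real.rpow_neg ht.le] at h
  linarith

lemma aux_t_abs_log {t T : ℝ} (ht : 0 < t) (htT : t ≤ T) :
    t * |Real.log t| ≤ 2 + T * |Real.log T| := by
  have hT : 0 < T := lt_of_lt_of_le ht htT
  rcases le_or_gt t 1 with h1 | h1
  · have hb := aux_abs_log ht h1 (by norm_num : (0:ℝ) < 1/2)
    have hle : t * |Real.log t| ≤ t * (t ^ (-(1/2):ℝ) / (1/2)) :=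
      mul_le_mul_of_nonneg_left hb ht.le
    have h2 : t * (t ^ (-(1/2):ℝ) / (1/2)) = 2 * t ^ ((1:ℝ)/2) := by
      rw [show t * (t ^ (-(1/2):ℝ)/(1/2)) = 2 * (t^(1:ℝ) * t^(-(1/2):ℝ)) by
        rw [Real.rpow_one]; ring, ← Real.rpow_add ht]
      norm_num
    have h3 : t ^ ((1:ℝ)/2) ≤ 1 := Real.rpow_le_one ht.le h1 (by norm_num)
    nlinarith [mul_nonneg hT.le (abs_nonneg (Real.log T))]
  · have hlog : Real.log t ≤ |Real.log T| :=
      le_trans (Real.log_le_log (by linarith) htT) (le_abs_self _)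
    have habs : |Real.log t| = Real.log t := abs_of_nonneg (Real.log_nonneg h1.le)
    rw [habs]
    nlinarith [Real.log_nonneg h1.le]

lemma aux_gamma_contDiffAt {s : ℝ} (hs : 0 < s) : ContDiffAt ℝ 2 Real.Gamma s := by
  have hopen : IsOpen {z : ℂ | 0 < z.re} := isOpen_lt continuous_const Complex.continuous_re
  have hdiff : DifferentiableOn ℂ Complex.Gamma {z : ℂ | 0 < z.re} := by
    intro z hz
    refine (Complex.differentiableAt_Gamma z fun m => ?_).differentiableWithinAt
    intro h
    rw [h] at hz
    simp only [mem_setOf_eq, Complex.neg_re, Complex.natCast_re] at hz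
    have : (0:ℝ) ≤ m := Nat.cast_nonneg m
    linarith
  have h1 : AnalyticAt ℂ Complex.Gamma (s:ℂ) :=
    (hdiff.analyticOnNhd hopen) _ (by simpa using hs)
  have h3 : ContDiffAt ℝ 2 (fun x : ℝ => (Complex.Gamma x).re) s :=
    (h1.contDiffAt (n := 2)).real_of_complex
  have heq : (fun x : ℝ => (Complex.Gamma x).re) = Real.Gamma := by
    funext x; rw [Complex.Gamma_ofReal]; simp
  rwa [heq] at h3

lemma aux_G_contDiffAt {x : ℝ} (hx : x < 1) :
    ContDiffAt ℝ 2 (fun y : ℝ => (Real.Gamma (1 - y))⁻¹) x := by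
  have h1 : ContDiffAt ℝ 2 (fun y : ℝ => Real.Gamma (1 - y)) x :=
    (aux_gamma_contDiffAt (by linarith : (0:ℝ) < 1 - x)).comp x
      ((contDiff_const.sub contDiff_id).contDiffAt)
  exact h1.inv (ne_of_gt (Real.Gamma_pos_of_pos (by linarith)))

lemma aux_majorant {a0 T : ℝ} (h0 : 0 < a0) (h1 : a0 < 1) (hT : 0 < T) :
    ∃ C > 0, ∀ t ∈ Ioc (0:ℝ) T,
      t ^ (-a0) * (1 + |Real.log t|) ≤ C * t ^ (-((1+a0)/2)) := by
  set b : ℝ := (1+a0)/2 with hb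
  set ε : ℝ := (1-a0)/2 with hε
  have hεpos : 0 < ε := by rw [hε]; linarith
  have hbpos : 0 < b := by rw [hb]; linarith
  refine ⟨(1 + 1/ε) + (1 + |Real.log T|) * T ^ b, by positivity, fun t ht => ?_⟩
  obtain ⟨ht0, htT⟩ := ht
  have htb : (0:ℝ) < t ^ (-b) := Real.rpow_pos_of_pos ht0 _
  rcases le_or_gt t 1 with hle | hgt
  · have hlog := aux_abs_log ht0 hle hεpos
    have e1 : t ^ (-a0) * (1 + |Real.log t|) ≤ t ^ (-a0) + (1/ε) * (t ^ (-a0) * t ^ (-ε)) := by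
      have := mul_le_mul_of_nonneg_left hlog (Real.rpow_nonneg ht0.le (-a0))
      rw [mul_add, mul_one]
      rw [div_eq_mul_inv] at this
      have h' : 1/ε * (t^(-a0)*t^(-ε)) = t^(-a0)*(t^(-ε)*ε⁻¹) := by ring
      rw [h']
      linarith
    have e2 : t ^ (-a0) * t ^ (-ε) = t ^ (-b) := by
      rw [← Real.rpow_add ht0]; ring_nf; congr 1; rw [hb, hε]; ring
    have e3 : t ^ (-a0) ≤ t ^ (-b) :=
      Real.rpow_le_rpow_of_exponent_ge ht0 hle (by rw [hb]; linarith)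
    have e4 : 0 ≤ (1 + |Real.log T|) * T ^ b * t ^ (-b) := by positivity
    rw [e2] at e1
    calc t ^ (-a0) * (1 + |Real.log t|) ≤ t ^ (-b) + (1/ε) * t ^ (-b) := by linarith
    _ ≤ ((1 + 1/ε) + (1 + |Real.log T|) * T ^ b) * t ^ (-b) := by nlinarith
  · have ha : t ^ (-a0) ≤ 1 := Real.rpow_le_one_of_one_le_of_nonpos hgt.le (by linarith)
    have hlog : |Real.log t| ≤ |Real.log T| := by
      rw [abs_of_nonneg (Real.log_nonneg hgt.le)]
      exact le_trans (Real.log_le_log (by linarith) htT) (le_abs_self _)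
    have hTb : 1 ≤ T ^ b * t ^ (-b) := by
      rw [Real.rpow_neg ht0.le, ← div_eq_mul_inv, le_div_iff₀ (Real.rpow_pos_of_pos ht0 b)]
      rw [one_mul]
      exact Real.rpow_le_rpow ht0.le htT hbpos.le
    have lhs1 : t ^ (-a0) * (1 + |Real.log t|) ≤ 1 + |Real.log T| := by
      have h2 : 0 ≤ 1 + |Real.log t| := by positivity
      nlinarith [abs_nonneg (Real.log t), Real.rpow_nonneg ht0.le (-a0)]
    calc t ^ (-a0) * (1 + |Real.log t|) ≤ 1 + |Real.log T| := lhs1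
    _ ≤ (1 + |Real.log T|) * (T ^ b * t ^ (-b)) := by nlinarith [abs_nonneg (Real.log T)]
    _ ≤ ((1 + 1/ε) + (1 + |Real.log T|) * T ^ b) * t ^ (-b) := by
        rw [← mul_assoc]
        have : 0 ≤ (1 + 1/ε) * t ^ (-b) := by positivity
        nlinarith

set_option maxHeartbeats 2000000 in
/-- The perturbation term `g̃(t) = k(t) - t^{-α₀}/Γ(1-α₀)` extends continuously
to `t = 0` with value `0`, and `g̃ ∈ L¹(0,T)` with `g̃' ∈ L¹(0,T)`. -/
theorem stmt_4 (T : ℝ) (hT : 0 < T) (α : ℝ → ℝ)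
    (hα : ContDiff ℝ 2 α)
    (hbd : ∃ M, ∀ z ∈ Icc (0:ℝ) T, |iteratedDeriv 2 α z| ≤ M)
    (hrange : ∀ z ∈ Icc (0:ℝ) T, α z ∈ Ioo (0:ℝ) 1)
    (g : ℝ → ℝ)
    (hg : ∀ t ∈ Ioc (0:ℝ) T,
      g t = t ^ (-(α t)) / Real.Gamma (1 - α t)
              - t ^ (-(α 0)) / Real.Gamma (1 - α 0)) :
    Tendsto g (nhdsWithin 0 (Ioi 0)) (nhds 0) ∧
      IntegrableOn g (Ioc 0 T) ∧
      IntegrableOn (deriv g) (Ioc 0 T) := by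
  clear hbd
  have h00 : (0:ℝ) ∈ Icc (0:ℝ) T := ⟨le_refl 0, hT.le⟩
  set a0 : ℝ := α 0 with ha0
  have ha0mem : a0 ∈ Ioo (0:ℝ) 1 := hrange 0 h00
  set G : ℝ → ℝ := fun x => (Real.Gamma (1 - x))⁻¹ with hGdef
  set u : ℝ → ℝ := fun t => (a0 - α t) * Real.log t with hudef
  set f : ℝ → ℝ := fun t =>
    Real.exp (-α t * Real.log t) * G (α t) - Real.exp (-a0 * Real.log t) * G a0 with hfdef
  -- g = f on Ioc 0 T
  have hgf : ∀ t ∈ Ioc (0:ℝ) T, g t = f t := by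
    intro t ht
    rw [hg t ht, hfdef]
    rw [Real.rpow_def_of_pos ht.1, Real.rpow_def_of_pos ht.1]
    simp only [hGdef, div_eq_mul_inv]
    rw [mul_comm (Real.log t) (-(α t)), mul_comm (Real.log t) (-a0)]
  -- range bounds m, M
  obtain ⟨xm, hxmmem, hmin⟩ := isCompact_Icc.exists_isMinOn ⟨0, h00⟩ hα.continuous.continuousOn
  obtain ⟨xM, hxMmem, hmax⟩ := isCompact_Icc.exists_isMaxOn ⟨0, h00⟩ hα.continuous.continuousOn
  set m : ℝ := α xm with hmdef
  set Mb : ℝ := α xM with hMdef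
  have hm0 : 0 < m := (hrange xm hxmmem).1
  have hM1 : Mb < 1 := (hrange xM hxMmem).2
  have hmem : ∀ t ∈ Icc (0:ℝ) T, α t ∈ Icc m Mb := fun t ht =>
    ⟨isMinOn_iff.mp hmin t ht, isMaxOn_iff.mp hmax t ht⟩
  have ha0mem' : a0 ∈ Icc m Mb := hmem 0 h00
  -- derivative of α : bound L on Icc 0 T
  have hαdiff : Differentiable ℝ α := hα.differentiable (by norm_num)
  have hαdc : Continuous (deriv α) := hα.continuous_deriv (by norm_num)
  obtain ⟨L0, hL0⟩ := isCompact_Icc.exists_bound_of_continuousOn (s := Icc (0:ℝ) T)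
    hαdc.continuousOn
  set L : ℝ := max L0 0 with hLdef
  have hL : 0 ≤ L := le_max_right _ _
  have hLb : ∀ x ∈ Icc (0:ℝ) T, |deriv α x| ≤ L := fun x hx =>
    le_trans (hL0 x hx) (le_max_left _ _)
  -- Lipschitz bound for α
  have hlip : ∀ t ∈ Icc (0:ℝ) T, |α t - a0| ≤ L * t := by
    intro t ht
    have key := Convex.norm_image_sub_le_of_norm_hasDerivWithin_le
      (f := α) (f' := deriv α) (s := Icc (0:ℝ) T) (C := L)
      (fun x _ => (hαdiff x).hasDerivAt.hasDerivWithinAt)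
      (fun x hx => hLb x hx) (convex_Icc _ _) h00 ht
    simpa [Real.norm_eq_abs, abs_of_nonneg ht.1] using key
  -- G differentiability facts
  have hGat : ∀ x : ℝ, x < 1 → ContDiffAt ℝ 2 G x := fun x hx => aux_G_contDiffAt hx
  have hGdiffat : ∀ x : ℝ, x < 1 → HasDerivAt G (deriv G x) x := fun x hx =>
    (((hGat x hx).differentiableAt (by norm_num)).hasDerivAt)
  have hGcont : ContinuousOn G (Iio (1:ℝ)) := fun x hx =>
    ((hGat x hx).continuousAt).continuousWithinAt
  have hGdone : ContDiffOn ℝ 2 G (Iio (1:ℝ)) := fun x hx => (hGat x hx).contDiffWithinAt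
  have hGdc : ContinuousOn (deriv G) (Iio (1:ℝ)) :=
    hGdone.continuousOn_deriv_of_isOpen isOpen_Iio (by norm_num)
  have hsub : Icc m Mb ⊆ Iio (1:ℝ) := fun x hx => lt_of_le_of_lt hx.2 hM1
  -- bounds for G and deriv G on Icc m Mb
  obtain ⟨K0, hK0⟩ := isCompact_Icc.exists_bound_of_continuousOn (s := Icc m Mb)
    (hGcont.mono hsub)
  set KG : ℝ := max K0 0 with hKGdef
  have hKG0 : 0 ≤ KG := le_max_right _ _
  have hKG : ∀ x ∈ Icc m Mb, |G x| ≤ KG := fun x hx =>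
    le_trans (hK0 x hx) (le_max_left _ _)
  obtain ⟨K1, hK1⟩ := isCompact_Icc.exists_bound_of_continuousOn (s := Icc m Mb)
    (hGdc.mono hsub)
  set KG' : ℝ := max K1 0 with hKG'def
  have hKG'0 : 0 ≤ KG' := le_max_right _ _
  have hKG' : ∀ x ∈ Icc m Mb, |deriv G x| ≤ KG' := fun x hx =>
    le_trans (hK1 x hx) (le_max_left _ _)
  -- Lipschitz bound for G on Icc m Mb
  have hGlip : ∀ x ∈ Icc m Mb, ∀ y ∈ Icc m Mb, |G y - G x| ≤ KG' * |y - x| := by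
    intro x hx y hy
    have key := Convex.norm_image_sub_le_of_norm_hasDerivWithin_le
      (f := G) (f' := deriv G) (s := Icc m Mb) (C := KG')
      (fun z hz => (hGdiffat z (hsub hz)).hasDerivWithinAt)
      (fun z hz => hKG' z hz) (convex_Icc _ _) hx hy
    simpa [Real.norm_eq_abs] using key
  -- bound for u
  set Bc : ℝ := 2 + T * |Real.log T| with hBdef
  have hBpos : 0 < Bc := by
    have : 0 ≤ T * |Real.log T| := mul_nonneg hT.le (abs_nonneg _)
    rw [hBdef]; linarith
  set UB : ℝ := L * Bc with hUBdef
  have hut : ∀ t ∈ Ioc (0:ℝ) T, |u t| ≤ L * (t * |Real.log t|) := by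
    intro t ht
    rw [hudef]
    simp only [abs_mul]
    have h1 : |a0 - α t| ≤ L * t := by
      rw [abs_sub_comm]; exact hlip t ⟨ht.1.le, ht.2⟩
    have := mul_le_mul_of_nonneg_right h1 (abs_nonneg (Real.log t))
    linarith [this]
  have huB : ∀ t ∈ Ioc (0:ℝ) T, |u t| ≤ UB := by
    intro t ht
    refine le_trans (hut t ht) ?_
    rw [hUBdef]
    exact mul_le_mul_of_nonneg_left (aux_t_abs_log ht.1 ht.2) hL
  set eU : ℝ := Real.exp UB with heUdef
  have heU1 : 1 ≤ eU := by
    rw [heUdef]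
    refine Real.one_le_exp ?_
    exact mul_nonneg hL hBpos.le
  have heUbd : ∀ t ∈ Ioc (0:ℝ) T, Real.exp (u t) ≤ eU := fun t ht =>
    Real.exp_le_exp.2 (le_trans (le_abs_self _) (huB t ht))
  have hexpu1 : ∀ t ∈ Ioc (0:ℝ) T, |Real.exp (u t) - 1| ≤ eU * |u t| := fun t ht =>
    aux_exp_sub_one (huB t ht)
  -- exponent split
  have hsplit : ∀ t : ℝ, Real.exp (-α t * Real.log t)
      = Real.exp (-a0 * Real.log t) * Real.exp (u t) := by
    intro t
    rw [← Real.exp_add]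
    congr 1
    rw [hudef]
    ring
  have hE0 : ∀ t : ℝ, 0 < t → Real.exp (-a0 * Real.log t) = t ^ (-a0) := by
    intro t ht
    rw [Real.rpow_def_of_pos ht, mul_comm]
  -- key bound for |f|
  set C1 : ℝ := L * (eU * KG + KG') with hC1def
  have hC1 : 0 ≤ C1 := by positivity
  clear_value a0 G u f m Mb L KG KG' Bc UB eU C1
  have key1 : ∀ t ∈ Ioc (0:ℝ) T, |f t| ≤ C1 * (t ^ ((1:ℝ) - a0) * (1 + |Real.log t|)) := by
    intro t ht
    have htmem : t ∈ Icc (0:ℝ) T := ⟨ht.1.le, ht.2⟩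
    have hαt : α t ∈ Icc m Mb := hmem t htmem
    have hft : f t = Real.exp (-a0 * Real.log t) *
        ((Real.exp (u t) - 1) * G (α t) + (G (α t) - G a0)) := by
      rw [hfdef]
      simp only
      rw [hsplit t]
      ring
    rw [hft, abs_mul, Real.abs_exp, hE0 t ht.1]
    have hin : |(Real.exp (u t) - 1) * G (α t) + (G (α t) - G a0)|
        ≤ C1 * (t * (1 + |Real.log t|)) := by
      have h1 : |(Real.exp (u t) - 1) * G (α t)| ≤ (eU * |u t|) * KG := by
        rw [abs_mul]
        exact mul_le_mul (hexpu1 t ht) (hKG _ hαt) (abs_nonneg _)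
          (by positivity)
      have h2 : |G (α t) - G a0| ≤ KG' * (L * t) := by
        refine le_trans (hGlip a0 ha0mem' (α t) hαt) ?_
        exact mul_le_mul_of_nonneg_left (hlip t htmem) hKG'0
      have h3 : |u t| ≤ L * (t * |Real.log t|) := hut t ht
      have h4 := abs_add_le ((Real.exp (u t) - 1) * G (α t)) (G (α t) - G a0)
      have h5 : (eU * |u t|) * KG ≤ eU * KG * (L * (t * |Real.log t|)) := by
        have := mul_le_mul_of_nonneg_left h3 (by positivity : (0:ℝ) ≤ eU)
        nlinarith
      rw [hC1def]
      nlinarith [mul_nonneg (mul_nonneg (mul_nonneg hL (le_trans zero_le_one heU1)) hKG0) ht.1.le,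
        mul_nonneg (mul_nonneg (mul_nonneg hL hKG'0) ht.1.le) (abs_nonneg (Real.log t))]
    calc t ^ (-a0) * |(Real.exp (u t) - 1) * G (α t) + (G (α t) - G a0)|
        ≤ t ^ (-a0) * (C1 * (t * (1 + |Real.log t|))) :=
          mul_le_mul_of_nonneg_left hin (Real.rpow_nonneg ht.1.le _)
      _ = C1 * (t ^ ((1:ℝ) - a0) * (1 + |Real.log t|)) := by
          rw [show t ^ ((1:ℝ) - a0) = t ^ (1:ℝ) * t ^ (-a0) by
            rw [← Real.rpow_add ht.1]; ring_nf]
          rw [Real.rpow_one]; ring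
  -- Part 1: Tendsto
  have hIoc : Ioc (0:ℝ) T ∈ nhdsWithin (0:ℝ) (Ioi 0) :=
    Ioc_mem_nhdsGT_of_mem ⟨le_refl 0, hT⟩
  have htend : Tendsto g (nhdsWithin 0 (Ioi 0)) (nhds 0) := by
    rw [tendsto_zero_iff_abs_tendsto_zero]
    have hb1 : ∀ᶠ t in nhdsWithin (0:ℝ) (Ioi 0),
        |g t| ≤ C1 * (t ^ ((1:ℝ) - a0) * (1 + |Real.log t|)) := by
      filter_upwards [hIoc] with t ht
      rw [hgf t ht]; exact key1 t ht
    refine squeeze_zero' (by filter_upwards with t using abs_nonneg _) hb1 ?_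
    have h1a : (0:ℝ) < 1 - a0 := by linarith [ha0mem.2]
    have ht1 : Tendsto (fun t : ℝ => t ^ ((1:ℝ) - a0)) (nhdsWithin 0 (Ioi 0)) (nhds 0) := by
      have h := (Real.continuousAt_rpow_const 0 (1 - a0) (Or.inr h1a.le)).tendsto
      rw [Real.zero_rpow (ne_of_gt h1a)] at h
      exact h.mono_left nhdsWithin_le_nhds
    have ht2 : Tendsto (fun t : ℝ => t ^ ((1:ℝ) - a0) * |Real.log t|)
        (nhdsWithin 0 (Ioi 0)) (nhds 0) := by
      have hmain := (tendsto_log_mul_rpow_nhdsGT_zero h1a).neg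
      rw [neg_zero] at hmain
      refine hmain.congr' ?_
      filter_upwards [Ioo_mem_nhdsGT_of_mem (α := ℝ) ⟨le_refl 0, zero_lt_one⟩] with t ht
      rw [abs_of_nonpos (Real.log_nonpos ht.1.le ht.2.le)]
      ring
    have h := (ht1.add ht2).const_mul C1
    simp only [add_zero, mul_zero] at h
    exact Tendsto.congr (fun t => by ring) h
  -- Part 2: integrability of g
  set b : ℝ := (1 + a0) / 2 with hbdef
  obtain ⟨C2, hC2pos, hC2⟩ := aux_majorant ha0mem.1 ha0mem.2 hT
  have hC2' : ∀ t ∈ Ioc (0:ℝ) T, t ^ (-a0) * (1 + |Real.log t|) ≤ C2 * t ^ (-b) :=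
    fun t ht => hC2 t ht
  clear_value b
  have hmaj : IntegrableOn (fun t : ℝ => t ^ (-b)) (Ioc 0 T) volume := by
    rw [← intervalIntegrable_iff_integrableOn_Ioc_of_le hT.le]
    exact intervalIntegral.intervalIntegrable_rpow'
      (by rw [hbdef]; linarith [ha0mem.2, ha0mem.1] : (-1:ℝ) < -b)
  have hfc : ContinuousOn f (Ioc (0:ℝ) T) := by
    rw [hfdef]
    intro t ht
    have ht0 : (0:ℝ) < t := ht.1
    have hα1 : α t < 1 := (hrange t ⟨ht.1.le, ht.2⟩).2
    have c1 : ContinuousAt (fun s => Real.exp (-α s * Real.log s)) t :=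
      Real.continuous_exp.continuousAt.comp
        ((hα.continuous.continuousAt.neg.mul (Real.continuousAt_log (ne_of_gt ht0))))
    have c2 : ContinuousAt (fun s => G (α s)) t :=
      ((hGat (α t) hα1).continuousAt).comp hα.continuous.continuousAt
    have c3 : ContinuousAt (fun s => Real.exp (-a0 * Real.log s)) t :=
      Real.continuous_exp.continuousAt.comp
        (continuousAt_const.mul (Real.continuousAt_log (ne_of_gt ht0)))
    exact ((c1.mul c2).sub (c3.mul continuousAt_const)).continuousWithinAt
  have hbound2 : ∀ t ∈ Ioc (0:ℝ) T, |f t| ≤ (C1 * T * C2) * t ^ (-b) := by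
    intro t ht
    have h1 := key1 t ht
    have h2 : t ^ ((1:ℝ) - a0) * (1 + |Real.log t|)
        = t * (t ^ (-a0) * (1 + |Real.log t|)) := by
      rw [show t ^ ((1:ℝ) - a0) = t ^ (1:ℝ) * t ^ (-a0) by
        rw [← Real.rpow_add ht.1]; ring_nf, Real.rpow_one]
      ring
    have h3 := hC2' t ht
    calc |f t| ≤ C1 * (t * (t ^ (-a0) * (1 + |Real.log t|))) := by rw [← h2]; exact h1
      _ ≤ C1 * (T * (C2 * t ^ (-b))) := by
          refine mul_le_mul_of_nonneg_left ?_ hC1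
          refine mul_le_mul ht.2 h3
            (mul_nonneg (Real.rpow_nonneg ht.1.le _) (by positivity)) hT.le
      _ = (C1 * T * C2) * t ^ (-b) := by ring
  have hintg : IntegrableOn g (Ioc 0 T) := by
    refine Integrable.mono' (hmaj.const_mul (C1 * T * C2)) ?_ ?_
    · exact (hfc.aestronglyMeasurable measurableSet_Ioc).congr
        ((ae_restrict_iff' measurableSet_Ioc).2 (ae_of_all _ fun t ht => (hgf t ht).symm))
    · refine (ae_restrict_iff' measurableSet_Ioc).2 (ae_of_all _ fun t ht => ?_)
      rw [Real.norm_eq_abs, hgf t ht]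
      exact hbound2 t ht
  -- Part 3: integrability of deriv g
  set A : ℝ → ℝ := fun t =>
    Real.exp (-α t * Real.log t) * (-(deriv α t) * Real.log t) * G (α t) with hAdef
  set Bf : ℝ → ℝ := fun t =>
    Real.exp (-α t * Real.log t) * (deriv G (α t) * deriv α t) with hBfdef
  set Cf : ℝ → ℝ := fun t => Real.exp (-a0 * Real.log t) * t⁻¹ *
      (a0 * G a0 - α t * G (α t) * Real.exp (u t)) with hCfdef
  clear_value A Bf Cf
  have hderivf : ∀ t ∈ Ioo (0:ℝ) T, HasDerivAt f (A t + Bf t + Cf t) t := by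
    intro t ht
    have ht0 : (0:ℝ) < t := ht.1
    have hα1 : α t < 1 := (hrange t ⟨ht.1.le, ht.2.le⟩).2
    have h1 : HasDerivAt (fun s => -α s * Real.log s)
        (-(deriv α t) * Real.log t + (-α t) * t⁻¹) t :=
      ((hαdiff t).hasDerivAt.neg.mul (Real.hasDerivAt_log (ne_of_gt ht0)))
    have h2 := h1.exp
    have h3 : HasDerivAt (fun s => G (α s)) (deriv G (α t) * deriv α t) t :=
      (hGdiffat (α t) hα1).comp t (hαdiff t).hasDerivAt
    have h5 : HasDerivAt (fun s : ℝ => -a0 * Real.log s) (-a0 * t⁻¹) t := by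
      simpa using (Real.hasDerivAt_log (ne_of_gt ht0)).const_mul (-a0)
    have h6 := (h2.mul h3).sub ((h5.exp).mul_const (G a0))
    rw [hfdef]
    refine h6.congr_deriv ?_
    rw [hAdef, hBfdef, hCfdef]
    simp only
    rw [hsplit t]
    ring
  have hderivg : ∀ t ∈ Ioo (0:ℝ) T, deriv g t = A t + Bf t + Cf t := by
    intro t ht
    have hev : g =ᶠ[nhds t] f := by
      filter_upwards [isOpen_Ioo.mem_nhds ht] with s hs
      exact hgf s ⟨hs.1, hs.2.le⟩
    rw [hev.deriv_eq, (hderivf t ht).deriv]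
  set C3 : ℝ := eU * L * KG + eU * KG' * L + L * (KG + KG') + KG * eU * L with hC3def
  have heU0 : (0:ℝ) ≤ eU := le_trans zero_le_one heU1
  have hC3 : 0 ≤ C3 := by
    rw [hC3def]
    have h1 : 0 ≤ eU * L * KG := mul_nonneg (mul_nonneg heU0 hL) hKG0
    have h2 : 0 ≤ eU * KG' * L := mul_nonneg (mul_nonneg heU0 hKG'0) hL
    have h3 : 0 ≤ L * (KG + KG') := mul_nonneg hL (add_nonneg hKG0 hKG'0)
    have h4 : 0 ≤ KG * eU * L := mul_nonneg (mul_nonneg hKG0 heU0) hL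
    linarith
  clear_value C3
  have key3 : ∀ t ∈ Ioo (0:ℝ) T,
      |A t + Bf t + Cf t| ≤ C3 * (t ^ (-a0) * (1 + |Real.log t|)) := by
    intro t ht
    have htIoc : t ∈ Ioc (0:ℝ) T := ⟨ht.1, ht.2.le⟩
    have htmem : t ∈ Icc (0:ℝ) T := ⟨ht.1.le, ht.2.le⟩
    have hαt : α t ∈ Icc m Mb := hmem t htmem
    have hαt01 : α t ∈ Ioo (0:ℝ) 1 := hrange t htmem
    set P : ℝ := t ^ (-a0) with hPdef
    have hP : 0 ≤ P := Real.rpow_nonneg ht.1.le _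
    clear_value P
    have hlt : (0:ℝ) ≤ |Real.log t| := abs_nonneg _
    have e0 : Real.exp (-α t * Real.log t) ≤ P * eU := by
      rw [hsplit t, hE0 t ht.1, ← hPdef]
      exact mul_le_mul_of_nonneg_left (heUbd t htIoc) hP
    have e0' : (0:ℝ) ≤ Real.exp (-α t * Real.log t) := (Real.exp_pos _).le
    have hPe : (0:ℝ) ≤ P * eU := mul_nonneg hP heU0
    have habsA : |A t| ≤ P * eU * (L * |Real.log t|) * KG := by
      rw [hAdef]
      simp only [abs_mul, abs_neg]
      refine mul_le_mul (mul_le_mul ?_ ?_ (mul_nonneg (abs_nonneg _) (abs_nonneg _)) hPe)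
        (hKG _ hαt) (abs_nonneg _) (mul_nonneg hPe (mul_nonneg hL hlt))
      · rw [Real.abs_exp]; exact e0
      · exact mul_le_mul_of_nonneg_right (hLb t htmem) hlt
    have habsB : |Bf t| ≤ P * eU * (KG' * L) := by
      rw [hBfdef]
      simp only [abs_mul]
      refine mul_le_mul ?_ ?_ (mul_nonneg (abs_nonneg _) (abs_nonneg _)) hPe
      · rw [Real.abs_exp]; exact e0
      · exact mul_le_mul (hKG' _ hαt) (hLb t htmem) (abs_nonneg _) hKG'0
    have hinner : |a0 * G a0 - α t * G (α t) * Real.exp (u t)|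
        ≤ L * t * KG + KG' * (L * t) + KG * (eU * (L * (t * |Real.log t|))) := by
      have hsplit2 : a0 * G a0 - α t * G (α t) * Real.exp (u t)
          = (a0 - α t) * G a0 + α t * (G a0 - G (α t))
            + α t * G (α t) * (1 - Real.exp (u t)) := by ring
      rw [hsplit2]
      have i1 : |(a0 - α t) * G a0| ≤ L * t * KG := by
        rw [abs_mul, abs_sub_comm]
        exact mul_le_mul (hlip t htmem) (hKG _ ha0mem') (abs_nonneg _)
          (mul_nonneg hL ht.1.le)
      have i2 : |α t * (G a0 - G (α t))| ≤ KG' * (L * t) := by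
        rw [abs_mul]
        have := hGlip (α t) hαt a0 ha0mem'
        calc |α t| * |G a0 - G (α t)| ≤ 1 * (KG' * |a0 - α t|) := by
              refine mul_le_mul ?_ this (abs_nonneg _) zero_le_one
              rw [abs_of_pos hαt01.1]; exact hαt01.2.le
          _ = KG' * |a0 - α t| := by ring
          _ ≤ KG' * (L * t) := by
              refine mul_le_mul_of_nonneg_left ?_ hKG'0
              rw [abs_sub_comm]; exact hlip t htmem
      have i3 : |α t * G (α t) * (1 - Real.exp (u t))|
          ≤ KG * (eU * (L * (t * |Real.log t|))) := by
        rw [abs_mul, abs_mul, abs_sub_comm]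
        have j1 : |α t| * |G (α t)| ≤ 1 * KG := by
          refine mul_le_mul ?_ (hKG _ hαt) (abs_nonneg _) zero_le_one
          rw [abs_of_pos hαt01.1]; exact hαt01.2.le
        have j2 : |Real.exp (u t) - 1| ≤ eU * (L * (t * |Real.log t|)) := by
          refine le_trans (hexpu1 t htIoc) ?_
          exact mul_le_mul_of_nonneg_left (hut t htIoc) heU0
        calc |α t| * |G (α t)| * |Real.exp (u t) - 1|
            ≤ (1 * KG) * (eU * (L * (t * |Real.log t|))) :=
              mul_le_mul j1 j2 (abs_nonneg _) (by linarith [hKG0])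
          _ = KG * (eU * (L * (t * |Real.log t|))) := by ring
      calc |(a0 - α t) * G a0 + α t * (G a0 - G (α t))
            + α t * G (α t) * (1 - Real.exp (u t))|
          ≤ |(a0 - α t) * G a0| + |α t * (G a0 - G (α t))|
            + |α t * G (α t) * (1 - Real.exp (u t))| := abs_add_three _ _ _
        _ ≤ L * t * KG + KG' * (L * t) + KG * (eU * (L * (t * |Real.log t|))) := by
            linarith
    have habsC : |Cf t| ≤ P * (L * KG + KG' * L + KG * (eU * (L * |Real.log t|))) := by
      rw [hCfdef]
      simp only [abs_mul]
      rw [Real.abs_exp, hE0 t ht.1, ← hPdef, abs_of_pos (inv_pos.2 ht.1)]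
      calc P * t⁻¹ * |a0 * G a0 - α t * G (α t) * Real.exp (u t)|
          ≤ P * t⁻¹ * (L * t * KG + KG' * (L * t) + KG * (eU * (L * (t * |Real.log t|)))) := by
            exact mul_le_mul_of_nonneg_left hinner
              (mul_nonneg hP (inv_nonneg.2 ht.1.le))
        _ = P * (L * KG + KG' * L + KG * (eU * (L * |Real.log t|))) := by
            have htne : t ≠ 0 := ht.1.ne'
            field_simp
      
    have htri := abs_add_three (A t) (Bf t) (Cf t)
    rw [hC3def]
    have hPl : 0 ≤ P * |Real.log t| := mul_nonneg hP hlt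
    have n1 : 0 ≤ eU * L * KG * P := by positivity
    have n2 : 0 ≤ KG * eU * L * P := by positivity
    have n3 : 0 ≤ eU * KG' * L * (P * |Real.log t|) := by positivity
    have n4 : 0 ≤ (L * KG + L * KG') * (P * |Real.log t|) := by positivity
    have hexp : (eU * L * KG + eU * KG' * L + L * (KG + KG') + KG * eU * L)
          * (P * (1 + |Real.log t|))
        - (P * eU * (L * |Real.log t|) * KG + P * eU * (KG' * L)
          + P * (L * KG + KG' * L + KG * (eU * (L * |Real.log t|))))
        = eU * L * KG * P + KG * eU * L * P + eU * KG' * L * (P * |Real.log t|)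
          + (L * KG + L * KG') * (P * |Real.log t|) := by ring
    linarith
  have hintd : IntegrableOn (deriv g) (Ioc 0 T) := by
    refine Integrable.mono' (hmaj.const_mul (C3 * C2))
      (measurable_deriv g).aestronglyMeasurable ?_
    rw [ae_restrict_iff' measurableSet_Ioc]
    have hTne : ∀ᵐ (t : ℝ), t ≠ T := by
      have h0 : (volume : Measure ℝ) {T} = 0 := measure_singleton T
      have := measure_eq_zero_iff_ae_notMem.mp h0
      filter_upwards [this] with t h ht
      exact h (by simpa using ht)
    filter_upwards [hTne] with t htne htmem
    have htoo : t ∈ Ioo (0:ℝ) T := ⟨htmem.1, lt_of_le_of_ne htmem.2 htne⟩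
    rw [Real.norm_eq_abs, hderivg t htoo]
    calc |A t + Bf t + Cf t| ≤ C3 * (t ^ (-a0) * (1 + |Real.log t|)) := key3 t htoo
      _ ≤ C3 * (C2 * t ^ (-b)) := mul_le_mul_of_nonneg_left (hC2' t htmem) hC3
      _ = (C3 * C2) * t ^ (-b) := by ring
  exact ⟨htend, hintg, hintd⟩
end

section
/- Let α₀ ∈ (0,1), λ > 0, and u₀ ∈ ℝ. The function u(t) = E_{2-α₀,1}(-λ t^{2-α₀}) u₀ solves u'(t) + λ ∫₀ᵗ (t-s)^{-α₀}/Γ(1-α₀) · u(s) ds = 0 for t ∈ (0,T] with u(0) = u₀. -/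
open MeasureTheory Set Real intervalIntegral
open scoped Nat

/-- factorial lower bound on Gamma -/
lemma aux_gamma_ge_factorial (k : ℕ) {x : ℝ} (hk : 1 ≤ k) (hx : (k : ℝ) + 1 ≤ x) :
    (k ! : ℝ) ≤ Real.Gamma x := by
  have h2 : (2:ℝ) ≤ (k:ℝ) + 1 := by
    have : (1:ℝ) ≤ (k:ℝ) := by exact_mod_cast hk
    linarith
  have hmem : ((k:ℝ) + 1) ∈ Ici (2:ℝ) := h2
  have hmem' : x ∈ Ici (2:ℝ) := le_trans h2 hx
  have := Real.Gamma_strictMonoOn_Ici.monotoneOn hmem hmem' hx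
  rwa [Real.Gamma_nat_eq_factorial] at this

lemma aux_summable (q : ℝ) : Summable (fun k : ℕ => q ^ k * ((k:ℝ) + 1) / k !) := by
  apply Summable.of_norm_bounded (g := fun k : ℕ => (2 * |q|) ^ k / k !)
    (Real.summable_pow_div_factorial (2 * |q|))
  intro k
  have hk1 : (k:ℝ) + 1 ≤ 2 ^ k := by
    induction k with
    | zero => norm_num
    | succ n ih =>
      push_cast
      rw [pow_succ]
      push_cast at ih
      nlinarith [pow_pos (by norm_num : (0:ℝ) < 2) n]
  have hfac : (0:ℝ) < k ! := by exact_mod_cast Nat.factorial_pos k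
  rw [Real.norm_eq_abs, abs_div, abs_mul, abs_pow]
  rw [abs_of_nonneg (by positivity : (0:ℝ) ≤ (k:ℝ)+1), abs_of_pos hfac]
  rw [mul_pow, div_le_div_iff_of_pos_right hfac]
  have : |q| ^ k * ((k:ℝ)+1) ≤ |q| ^ k * 2 ^ k := by
    apply mul_le_mul_of_nonneg_left hk1 (by positivity)
  calc |q| ^ k * ((k:ℝ)+1) ≤ |q| ^ k * 2 ^ k := this
    _ = 2 ^ k * |q| ^ k := by ring

lemma aux_real_beta {a b : ℝ} (ha : 0 < a) (hb : 0 < b) :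
    ∫ x in (0:ℝ)..1, x ^ (a - 1) * (1 - x) ^ (b - 1)
      = Real.Gamma a * Real.Gamma b / Real.Gamma (a + b) := by
  have h := Complex.Gamma_mul_Gamma_eq_betaIntegral (s := (a:ℂ)) (t := (b:ℂ))
    (by simpa using ha) (by simpa using hb)
  have hbeta : Complex.betaIntegral (a:ℂ) (b:ℂ)
      = ((∫ x in (0:ℝ)..1, x ^ (a - 1) * (1 - x) ^ (b - 1) : ℝ) : ℂ) := by
    rw [Complex.betaIntegral, ← intervalIntegral.integral_ofReal]
    apply intervalIntegral.integral_congr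
    intro x hx
    rw [uIcc_of_le zero_le_one] at hx
    show (x:ℂ) ^ ((a:ℂ) - 1) * (1 - (x:ℂ)) ^ ((b:ℂ) - 1) = _
    rw [show ((a:ℂ) - 1) = ((a - 1 : ℝ) : ℂ) by push_cast; ring,
      show ((b:ℂ) - 1) = ((b - 1 : ℝ) : ℂ) by push_cast; ring,
      show ((1:ℂ) - (x:ℂ)) = ((1 - x : ℝ) : ℂ) by push_cast; ring,
      ← Complex.ofReal_cpow hx.1, ← Complex.ofReal_cpow (by linarith [hx.2] : (0:ℝ) ≤ 1 - x),
      ← Complex.ofReal_mul]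
  rw [hbeta, ← Complex.ofReal_add, Complex.Gamma_ofReal, Complex.Gamma_ofReal,
    Complex.Gamma_ofReal, ← Complex.ofReal_mul, ← Complex.ofReal_mul] at h
  have h' := Complex.ofReal_injective h
  have hG : Real.Gamma (a + b) ≠ 0 := (Real.Gamma_pos_of_pos (by linarith)).ne'
  rw [eq_div_iff hG, h']
  ring



lemma aux_conv_integral {t p α : ℝ} (ht : 0 < t) (hp : 0 ≤ p) (hα0 : 0 < α) (hα1 : α < 1) :
    ∫ s in (0:ℝ)..t, (t - s) ^ (-α) * s ^ p
      = t ^ (p + 1 - α) * (Real.Gamma (p + 1) * Real.Gamma (1 - α) / Real.Gamma (p + 2 - α)) := by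
  have hsub := intervalIntegral.integral_comp_mul_left
    (fun s => (t - s) ^ (-α) * s ^ p) ht.ne' (a := 0) (b := 1)
  rw [mul_zero, mul_one] at hsub
  have h2 : (∫ x in (0:ℝ)..1, (fun s => (t - s) ^ (-α) * s ^ p) (t * x))
      = ∫ x in (0:ℝ)..1, (t ^ (1 - α - 1 + p) : ℝ) * ((1 - x) ^ (-α) * x ^ p) := by
    apply intervalIntegral.integral_congr
    intro x hx
    rw [uIcc_of_le zero_le_one] at hx
    show (t - t * x) ^ (-α) * (t * x) ^ p = _
    have h1x : (0:ℝ) ≤ 1 - x := by linarith [hx.2]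
    rw [show t - t * x = t * (1 - x) by ring,
      Real.mul_rpow ht.le h1x, Real.mul_rpow ht.le hx.1,
      show (1 - α - 1 + p : ℝ) = -α + p by ring, Real.rpow_add ht]
    ring
  rw [h2, intervalIntegral.integral_const_mul] at hsub
  have hbeta : (∫ x in (0:ℝ)..1, (1 - x) ^ (-α) * x ^ p)
      = Real.Gamma (p + 1) * Real.Gamma (1 - α) / Real.Gamma (p + 2 - α) := by
    have := aux_real_beta (a := p + 1) (b := 1 - α) (by linarith) (by linarith)
    rw [show p + 1 - 1 = p by ring, show (1 - α - 1 : ℝ) = -α by ring,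
      show p + 1 + (1 - α) = p + 2 - α by ring] at this
    rw [← this]
    apply intervalIntegral.integral_congr
    intro x _; ring
  rw [hbeta] at hsub
  have := hsub.symm
  rw [smul_eq_mul] at this
  -- this : t⁻¹ * ∫ = t^(1-α-1+p) * B
  have ht' : t ≠ 0 := ht.ne'
  field_simp at this
  rw [this, show (p + 1 - α : ℝ) = (-α + p) + 1 by ring, Real.rpow_add_one ht']
  ring

lemma aux_conv_integrable {t p α : ℝ} (ht : 0 < t) (hp : 0 ≤ p) (hα0 : 0 < α) (hα1 : α < 1) :
    IntegrableOn (fun s => (t - s) ^ (-α) * s ^ p) (Ioc 0 t) := by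
  have hint : IntervalIntegrable (fun s : ℝ => (t - s) ^ (-α)) volume 0 t := by
    have h1 : IntervalIntegrable (fun s : ℝ => s ^ (-α)) volume 0 t :=
      intervalIntegrable_rpow' (by linarith)
    have := h1.comp_sub_left t
    simpa using this.symm
  have hint' : IntegrableOn (fun s : ℝ => (t - s) ^ (-α)) (Ioc 0 t) :=
    (intervalIntegrable_iff_integrableOn_Ioc_of_le ht.le).mp hint
  apply Integrable.mono' (hint'.const_mul (t ^ p))
  · exact (hint'.aestronglyMeasurable.mul
      ((Real.continuous_rpow_const hp).aestronglyMeasurable))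
  · rw [ae_restrict_iff' measurableSet_Ioc]
    filter_upwards with s hs
    have h1 : (0:ℝ) ≤ (t - s) ^ (-α) := Real.rpow_nonneg (by linarith [hs.2]) _
    have h2 : (0:ℝ) ≤ s ^ p := Real.rpow_nonneg hs.1.le _
    rw [Real.norm_eq_abs, abs_of_nonneg (mul_nonneg h1 h2)]
    have h3 : s ^ p ≤ t ^ p := Real.rpow_le_rpow hs.1.le hs.2 hp
    calc (t - s) ^ (-α) * s ^ p ≤ (t - s) ^ (-α) * t ^ p := by
          exact mul_le_mul_of_nonneg_left h3 h1
      _ = t ^ p * (t - s) ^ (-α) := by ring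

/-- Two-parameter Mittag-Leffler function `E_{β,γ}(z) = Σ_k z^k / Γ(βk+γ)`. -/
noncomputable def ML (β γ z : ℝ) : ℝ := ∑' k : ℕ, z ^ k / Real.Gamma (β * k + γ)

set_option maxHeartbeats 2000000 in
/-- `u(t) = E_{2-α₀,1}(-λ t^{2-α₀}) u₀` solves
`u' + λ ∫₀ᵗ (t-s)^{-α₀}/Γ(1-α₀) u(s) ds = 0` on `(0,T]` with `u(0) = u₀`. -/
theorem stmt_10 (T α₀ lam u₀ : ℝ) (hT : 0 < T) (h0 : 0 < α₀) (h1 : α₀ < 1)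
    (hlam : 0 < lam) (u : ℝ → ℝ)
    (hu : ∀ t, u t = ML (2 - α₀) 1 (-(lam * t ^ (2 - α₀))) * u₀) :
    u 0 = u₀ ∧
      ∀ t ∈ Ioc (0:ℝ) T,
        HasDerivAt u
          (-(lam * ∫ s in (0:ℝ)..t, (t - s) ^ (-α₀) / Real.Gamma (1 - α₀) * u s)) t := by
  set β : ℝ := 2 - α₀ with hβdef
  have hβ1 : 1 < β := by simp [hβdef]; linarith
  have hβ2 : β < 2 := by simp [hβdef]; linarith
  have hβ0 : 0 < β := by linarith
  set c : ℕ → ℝ := fun k => (-lam) ^ k / Real.Gamma (β * k + 1) with hcdef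
  have hGpos : ∀ k : ℕ, 0 < Real.Gamma (β * k + 1) := by
    intro k
    apply Real.Gamma_pos_of_pos
    positivity
  have hGk : ∀ k : ℕ, (k ! : ℝ) ≤ Real.Gamma (β * k + 1) := by
    intro k
    rcases Nat.eq_zero_or_pos k with hk | hk
    · subst hk; simp [Real.Gamma_one]
    · apply aux_gamma_ge_factorial k hk
      have : (k:ℝ) ≤ β * k := by
        nlinarith [(by exact_mod_cast hk : (1:ℝ) ≤ (k:ℝ))]
      linarith
  have hcabs : ∀ k : ℕ, |c k| ≤ lam ^ k / k ! := by
    intro k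
    rw [hcdef]
    simp only [abs_div, abs_pow, abs_neg, abs_of_pos hlam, abs_of_pos (hGpos k)]
    apply div_le_div_of_nonneg_left (by positivity) (by exact_mod_cast Nat.factorial_pos k) (hGk k)
  -- u series formula
  have hueq : ∀ s : ℝ, 0 ≤ s → u s = (∑' k : ℕ, c k * s ^ (β * k)) * u₀ := by
    intro s hs
    rw [hu s, ML]
    congr 1
    apply tsum_congr
    intro k
    rw [hcdef]
    have h1 : s ^ (β * (k:ℝ)) = (s ^ β) ^ k := by
      rw [Real.rpow_mul hs, Real.rpow_natCast]
    rw [h1, neg_pow, mul_pow]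
    ring
  constructor
  · rw [hu 0]
    rw [Real.zero_rpow hβ0.ne', mul_zero, neg_zero, ML]
    rw [tsum_eq_single 0 (by intro k hk; simp [zero_pow hk])]
    simp [Real.Gamma_one]
  · intro t ht
    obtain ⟨ht0, htT⟩ := ht
    set M : ℝ := T + 1 with hMdef
    have hM1 : (1:ℝ) ≤ M := by linarith
    have htM : t < M := by linarith
    set q : ℝ := lam * M ^ β with hqdef
    have hq0 : 0 ≤ q := by positivity
    have hMβ1 : (1:ℝ) ≤ M ^ β := Real.one_le_rpow hM1 hβ0.le
    -- the series of derivatives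
    set g : ℕ → ℝ → ℝ := fun k y => c k * y ^ (β * k) with hgdef
    set g' : ℕ → ℝ → ℝ := fun k y => c k * (β * k * y ^ (β * k - 1)) with hg'def
    set bnd : ℕ → ℝ := fun k => 2 * (q ^ k * ((k:ℝ) + 1) / k !) with hbnddef
    have hbnd_summable : Summable bnd := (aux_summable q).mul_left 2
    have hderiv : ∀ k : ℕ, ∀ y ∈ Ioo (0:ℝ) M, HasDerivAt (g k) (g' k y) y := by
      intro k y hy
      exact (Real.hasDerivAt_rpow_const (Or.inl hy.1.ne')).const_mul (c k)
    have hbound : ∀ k : ℕ, ∀ y ∈ Ioo (0:ℝ) M, ‖g' k y‖ ≤ bnd k := by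
      intro k y hy
      rcases Nat.eq_zero_or_pos k with hk | hk
      · subst hk
        norm_num [hg'def, hbnddef]
      · have hβk1 : (0:ℝ) ≤ β * k - 1 := by
          have : (1:ℝ) ≤ (k:ℝ) := by exact_mod_cast hk
          nlinarith
        have hy1 : y ^ (β * k - 1) ≤ M ^ (β * k - 1) :=
          Real.rpow_le_rpow hy.1.le hy.2.le hβk1
        have hy2 : M ^ (β * (k:ℝ) - 1) ≤ M ^ (β * (k:ℝ)) :=
          Real.rpow_le_rpow_of_exponent_le hM1 (by linarith)
        have hy3 : M ^ (β * (k:ℝ)) = (M ^ β) ^ k := by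
          rw [Real.rpow_mul (by linarith : (0:ℝ) ≤ M), Real.rpow_natCast]
        have hyn : (0:ℝ) ≤ y ^ (β * k - 1) := Real.rpow_nonneg hy.1.le _
        have hfacpos : (0:ℝ) < k ! := by exact_mod_cast Nat.factorial_pos k
        simp only [hg'def, Real.norm_eq_abs, abs_mul, abs_of_nonneg hyn, abs_of_pos hβ0,
          Nat.abs_cast]
        have hβk2 : β * (k:ℝ) ≤ 2 * ((k:ℝ) + 1) := by
          have : (0:ℝ) ≤ (k:ℝ) := Nat.cast_nonneg k
          nlinarith
        calc |c k| * (β * k * y ^ (β * k - 1))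
            ≤ (lam ^ k / k !) * (β * k * (M ^ β) ^ k) := by
              apply mul_le_mul (hcabs k) ?_ (by positivity) (by positivity)
              apply mul_le_mul_of_nonneg_left ?_ (by positivity)
              calc y ^ (β * (k:ℝ) - 1) ≤ M ^ (β * (k:ℝ) - 1) := hy1
                _ ≤ M ^ (β * (k:ℝ)) := hy2
                _ = (M ^ β) ^ k := hy3
          _ ≤ (lam ^ k / k !) * (2 * ((k:ℝ) + 1) * (M ^ β) ^ k) := by
              apply mul_le_mul_of_nonneg_left ?_ (by positivity)
              apply mul_le_mul_of_nonneg_right hβk2 (by positivity)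
          _ = bnd k := by
              rw [hbnddef, hqdef]
              field_simp
              ring
    have hsum0 : Summable fun k : ℕ => g k t := by
      apply Summable.of_norm_bounded (aux_summable q)
      intro k
      have hfacpos : (0:ℝ) < k ! := by exact_mod_cast Nat.factorial_pos k
      rw [hgdef, Real.norm_eq_abs, abs_mul]
      have h3 : t ^ (β * (k:ℝ)) ≤ (M ^ β) ^ k := by
        calc t ^ (β * (k:ℝ)) ≤ M ^ (β * (k:ℝ)) :=
              Real.rpow_le_rpow ht0.le htM.le (by positivity)
          _ = (M ^ β) ^ k := by
              rw [Real.rpow_mul (by linarith : (0:ℝ) ≤ M), Real.rpow_natCast]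
      rw [abs_of_nonneg (Real.rpow_nonneg ht0.le _)]
      calc |c k| * t ^ (β * (k:ℝ))
          ≤ (lam ^ k / k !) * (M ^ β) ^ k := by
            exact mul_le_mul (hcabs k) h3 (Real.rpow_nonneg ht0.le _) (by positivity)
        _ ≤ q ^ k * ((k:ℝ) + 1) / k ! := by
            rw [hqdef, mul_pow]
            rw [div_mul_eq_mul_div, div_le_div_iff_of_pos_right hfacpos]
            exact le_mul_of_one_le_right (by positivity)
              (by linarith [Nat.cast_nonneg (α := ℝ) k])
    have htIoo : t ∈ Ioo (0:ℝ) M := ⟨ht0, htM⟩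
    have hDeriv : HasDerivAt (fun y => ∑' k : ℕ, g k y) (∑' k : ℕ, g' k t) t :=
      hasDerivAt_tsum_of_isPreconnected hbnd_summable isOpen_Ioo
        (convex_Ioo _ _).isPreconnected hderiv hbound htIoo hsum0 htIoo
    have hDerivu : HasDerivAt u ((∑' k : ℕ, g' k t) * u₀) t := by
      apply HasDerivAt.congr_of_eventuallyEq (hDeriv.mul_const u₀)
      filter_upwards [isOpen_Ioi.mem_nhds ht0] with y hy
      exact hueq y (le_of_lt hy)
    convert hDerivu using 1
    -- remains: the integral identity
    have hΓ1α : 0 < Real.Gamma (1 - α₀) := Real.Gamma_pos_of_pos (by linarith)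
    set m : ℝ := min 1 (Real.Gamma (2 - α₀)) with hmdef
    have hm0 : 0 < m := lt_min one_pos (Real.Gamma_pos_of_pos (by linarith))
    have hGk2 : ∀ k : ℕ, (k ! : ℝ) * m ≤ Real.Gamma (β * k + 2 - α₀) := by
      intro k
      rcases Nat.eq_zero_or_pos k with hk | hk
      · subst hk
        simp only [Nat.cast_zero, mul_zero, Nat.factorial_zero, Nat.cast_one, one_mul, zero_add]
        exact min_le_right _ _
      · have h1 : (k ! : ℝ) * m ≤ k ! := by
          have : (0:ℝ) ≤ (k ! : ℝ) := Nat.cast_nonneg _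
          nlinarith [min_le_left (1:ℝ) (Real.Gamma (2 - α₀))]
        refine h1.trans (aux_gamma_ge_factorial k hk ?_)
        have hk1 : (1:ℝ) ≤ (k:ℝ) := by exact_mod_cast hk
        nlinarith
    set A : ℕ → ℝ := fun k => u₀ / Real.Gamma (1 - α₀) * c k with hAdef
    set F : ℕ → ℝ → ℝ := fun k s => A k * ((t - s) ^ (-α₀) * s ^ (β * k)) with hFdef
    have hβknn : ∀ k : ℕ, (0:ℝ) ≤ β * k := fun k => by positivity
    have hpt : ∀ s ∈ Ioc (0:ℝ) t,
        (t - s) ^ (-α₀) / Real.Gamma (1 - α₀) * u s = ∑' k : ℕ, F k s := by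
      intro s hs
      simp only [hFdef, hAdef]
      have : ∀ k : ℕ, u₀ / Real.Gamma (1 - α₀) * c k * ((t - s) ^ (-α₀) * s ^ (β * k))
          = (u₀ / Real.Gamma (1 - α₀) * (t - s) ^ (-α₀)) * (c k * s ^ (β * k)) := by
        intro k; ring
      rw [tsum_congr this, tsum_mul_left, hueq s hs.1.le]
      ring
    have hFint : ∀ k : ℕ, IntegrableOn (F k) (Ioc 0 t) := by
      intro k
      exact (aux_conv_integrable (t := t) (p := β * k) ht0 (hβknn k) h0 h1).const_mul (A k)
    have hconv : ∀ k : ℕ, ∫ s in Ioc (0:ℝ) t, ((t - s) ^ (-α₀) * s ^ (β * (k:ℝ)))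
        = t ^ (β * k + 1 - α₀) *
          (Real.Gamma (β * k + 1) * Real.Gamma (1 - α₀) / Real.Gamma (β * k + 2 - α₀)) := by
      intro k
      rw [← intervalIntegral.integral_of_le ht0.le]
      rw [aux_conv_integral ht0 (hβknn k) h0 h1]
    have hnormval : ∀ k : ℕ, (∫ s in Ioc (0:ℝ) t, ‖F k s‖)
        = |A k| * (t ^ (β * k + 1 - α₀) *
          (Real.Gamma (β * k + 1) * Real.Gamma (1 - α₀) / Real.Gamma (β * k + 2 - α₀))) := by
      intro k
      rw [← hconv k, ← MeasureTheory.integral_const_mul]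
      apply setIntegral_congr_fun measurableSet_Ioc
      intro s hs
      have h1 : (0:ℝ) ≤ (t - s) ^ (-α₀) := Real.rpow_nonneg (by linarith [hs.2]) _
      have h2 : (0:ℝ) ≤ s ^ (β * (k:ℝ)) := Real.rpow_nonneg hs.1.le _
      simp only [hFdef, Real.norm_eq_abs, abs_mul]
      rw [abs_of_nonneg h1, abs_of_nonneg h2]
    have hFsummable : Summable fun k : ℕ => ∫ s in Ioc (0:ℝ) t, ‖F k s‖ := by
      refine Summable.of_nonneg_of_le
        (f := fun k : ℕ => (|u₀| * t ^ (1 - α₀) / m) * (q ^ k * ((k:ℝ) + 1) / k !))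
        (fun k => integral_nonneg (fun s => norm_nonneg _))
        ?_ ((aux_summable q).mul_left _)
      intro k
      rw [hnormval k]
      have hfacpos : (0:ℝ) < k ! := by exact_mod_cast Nat.factorial_pos k
      have hAk : |A k| = |u₀| / Real.Gamma (1 - α₀) * (lam ^ k / Real.Gamma (β * k + 1)) := by
        simp only [hAdef, hcdef, abs_mul, abs_div, abs_pow, abs_neg,
          abs_of_pos hlam, abs_of_pos hΓ1α, abs_of_pos (hGpos k)]
      have htpow : t ^ (β * (k:ℝ) + 1 - α₀) ≤ t ^ (1 - α₀) * (M ^ β) ^ k := by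
        rw [show β * (k:ℝ) + 1 - α₀ = (1 - α₀) + β * k by ring, Real.rpow_add ht0]
        apply mul_le_mul_of_nonneg_left ?_ (Real.rpow_nonneg ht0.le _)
        calc t ^ (β * (k:ℝ)) ≤ M ^ (β * (k:ℝ)) :=
              Real.rpow_le_rpow ht0.le htM.le (hβknn k)
          _ = (M ^ β) ^ k := by
              rw [Real.rpow_mul (by linarith : (0:ℝ) ≤ M), Real.rpow_natCast]
      have hGpos2 : 0 < Real.Gamma (β * k + 2 - α₀) :=
        Real.Gamma_pos_of_pos (by nlinarith [hβknn k])
      rw [hAk]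
      have step1 : |u₀| / Real.Gamma (1 - α₀) *
            (lam ^ k / Real.Gamma (β * ↑k + 1)) *
            (t ^ (β * ↑k + 1 - α₀) *
              (Real.Gamma (β * ↑k + 1) * Real.Gamma (1 - α₀) / Real.Gamma (β * ↑k + 2 - α₀)))
          = |u₀| * lam ^ k * t ^ (β * ↑k + 1 - α₀) / Real.Gamma (β * ↑k + 2 - α₀) := by
        field_simp
      rw [step1]
      have step2 : |u₀| * lam ^ k * t ^ (β * ↑k + 1 - α₀) / Real.Gamma (β * ↑k + 2 - α₀)
          ≤ (|u₀| * lam ^ k * (t ^ (1 - α₀) * (M ^ β) ^ k)) / ((k ! : ℝ) * m) := by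
        apply div_le_div₀ (by positivity) ?_ (by positivity) (hGk2 k)
        exact mul_le_mul_of_nonneg_left htpow (by positivity)
      refine step2.trans ?_
      show |u₀| * lam ^ k * (t ^ (1 - α₀) * (M ^ β) ^ k) / (↑k ! * m)
        ≤ |u₀| * t ^ (1 - α₀) / m * (q ^ k * ((k:ℝ) + 1) / ↑k !)
      rw [hqdef, mul_pow]
      have hk1 : (1:ℝ) ≤ (k:ℝ) + 1 := by linarith [Nat.cast_nonneg (α := ℝ) k]
      have expand : |u₀| * t ^ (1 - α₀) / m * (lam ^ k * (M ^ β) ^ k * ((k:ℝ) + 1) / ↑k !)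
          = (|u₀| * lam ^ k * (t ^ (1 - α₀) * (M ^ β) ^ k)) * ((k:ℝ) + 1) / (↑k ! * m) := by
        field_simp
      rw [expand, div_le_div_iff_of_pos_right (by positivity : (0:ℝ) < ↑k ! * m)]
      exact le_mul_of_one_le_right (by positivity) hk1
    -- rewrite the integral as a sum
    have hint_eq : (∫ s in (0:ℝ)..t, (t - s) ^ (-α₀) / Real.Gamma (1 - α₀) * u s)
        = ∑' k : ℕ, A k * (t ^ (β * k + 1 - α₀) *
            (Real.Gamma (β * k + 1) * Real.Gamma (1 - α₀) / Real.Gamma (β * k + 2 - α₀))) := by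
      rw [intervalIntegral.integral_of_le ht0.le]
      rw [setIntegral_congr_fun measurableSet_Ioc hpt]
      rw [← MeasureTheory.integral_tsum_of_summable_integral_norm hFint hFsummable]
      apply tsum_congr
      intro k
      simp only [hFdef]
      rw [MeasureTheory.integral_const_mul, hconv k]
    rw [hint_eq]
    -- summability of the derivative series
    have hg'sum : Summable fun k : ℕ => g' k t :=
      Summable.of_norm_bounded hbnd_summable (fun k => hbound k t htIoo)
    have hsum_h : Summable fun k : ℕ => g' k t * u₀ := hg'sum.mul_right u₀
    rw [← tsum_mul_right, hsum_h.tsum_eq_zero_add]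
    have hzero : g' 0 t * u₀ = 0 := by simp [hg'def]
    rw [hzero, zero_add, ← neg_mul, ← tsum_mul_left]
    apply tsum_congr
    intro k
    have hNpos : 0 < β * ((k:ℝ) + 1) := by positivity
    have hGN : 0 < Real.Gamma (β * ((k:ℝ) + 1)) := Real.Gamma_pos_of_pos hNpos
    simp only [hg'def, hcdef, hAdef, Nat.cast_add, Nat.cast_one]
    rw [Real.Gamma_add_one hNpos.ne']
    rw [show β * (k:ℝ) + 2 - α₀ = β * ((k:ℝ) + 1) by rw [hβdef]; ring,
        show β * (k:ℝ) + 1 - α₀ = β * ((k:ℝ) + 1) - 1 by rw [hβdef]; ring,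
        pow_succ]
    field_simp
end
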